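/- arXiv:1101.4446 — 4 statements merged into one kernel-verified Lean document; each statement's English description precedes it below -/
import Mathlib

section
/- Let M = (Q, s, Δ) be a finite automaton over the binary alphabet and let B ⊆ Q be a strongly accessible set of states. Let A_{B,ws} := {x ∈ {0,1}^ω : V_B(x) is weakly sparse}. Then for every ε > 0 there exists a bit-prediction strategy S such that Succ^bp(S, A_{B,ws}) > 1 − ε. -/
/-- A bit-prediction strategy: for each sequence `x` (0-indexed: `x i` is bit `x_{i+1}`),
a probability distribution on `(ℕ × {0,1}) ∪ {∞}`, where `some (i, z)` means
"after seeing `x_1, …, x_{i}` (indices `< i`), predict that bit `x_{i+1}` equals `z`",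
and `none` means "never predict".  The prediction at position `i` may depend only on
the first `i` bits. -/
structure BitPredStrategy where
  prob : (ℕ → Bool) → Option (ℕ × Bool) → ℝ
  nonneg : ∀ x o, 0 ≤ prob x o
  total : ∀ x, ∑' o : Option (ℕ × Bool), prob x o = 1
  adapted : ∀ x x' : ℕ → Bool, ∀ i : ℕ, ∀ z : Bool,
    (∀ j, j < i → x j = x' j) → prob x (some (i, z)) = prob x' (some (i, z))

/-- Success probability of a bit-prediction strategy: the probability of predicting
some bit of `x` correctly. -/
noncomputable def succBP (S : BitPredStrategy) (x : ℕ → Bool) : ℝ :=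
  ∑' i : ℕ, S.prob x (some (i, x i))

/-- `cars x t` is `N_t(x) = x_1 + ⋯ + x_t`. -/
def cars (x : ℕ → Bool) (t : ℕ) : ℕ :=
  ((Finset.range t).filter (fun i => x i = true)).card

/-- `x` is weakly sparse if `lim_{s→∞} inf_{t ≥ s} N_t(x)/t = 0`. -/
def weaklySparse (x : ℕ → Bool) : Prop :=
  Filter.liminf (fun t : ℕ => (cars x t : ℝ) / t) Filter.atTop = 0

/-- The state of the automaton with transition function `Δ` and start state `s`
after reading `t` bits of `x`: `q_0(x) = s`, `q_{t+1}(x) = Δ(q_t(x), x_{t+1})`. -/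
def autoRun {Q : Type*} (Δ : Q → Bool → Q) (s : Q) (x : ℕ → Bool) : ℕ → Q
  | 0 => s
  | t + 1 => Δ (autoRun Δ s x t) (x t)

theorem cars_succ (y : ℕ → Bool) (T : ℕ) :
    cars y (T + 1) = cars y T + if y T = true then 1 else 0 := by
  rw [cars, cars, Finset.range_add_one, Finset.filter_insert]
  split
  · rw [Finset.card_insert_of_notMem (by simp)]
  · rfl

open Classical in
noncomputable def distB {Q : Type} (Δ : Q → Bool → Q) (B : Finset Q) (q : Q) : ℕ :=
  if h : ∃ m : ℕ, ∃ l : List Bool, l.length = m ∧ l.foldl Δ q ∈ B then Nat.find h else 0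

section DB
variable {Q : Type} (Δ : Q → Bool → Q) (B : Finset Q)

open Classical in
theorem distB_of_mem {q : Q} (hq : q ∈ B) : distB Δ B q = 0 := by
  have h : ∃ m : ℕ, ∃ l : List Bool, l.length = m ∧ l.foldl Δ q ∈ B := ⟨0, [], rfl, hq⟩
  rw [distB, dif_pos h]
  exact Nat.find_eq_zero h |>.2 ⟨[], rfl, hq⟩

open Classical in
theorem distB_pos {q : Q} (h : ∃ l : List Bool, l.foldl Δ q ∈ B) (hq : q ∉ B) :
    0 < distB Δ B q := by
  obtain ⟨l, hl⟩ := h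
  have h' : ∃ m : ℕ, ∃ l : List Bool, l.length = m ∧ l.foldl Δ q ∈ B := ⟨l.length, l, rfl, hl⟩
  rw [distB, dif_pos h']
  rcases Nat.eq_zero_or_pos (Nat.find h') with h0 | h0
  · obtain ⟨l', hl', hmem⟩ := Nat.find_spec h'
    rw [h0] at hl'
    rw [List.length_eq_zero_iff] at hl'
    subst hl'
    simp at hmem
    exact absurd hmem hq
  · exact h0

open Classical in
theorem exists_gbit {q : Q} (h : ∃ l : List Bool, l.foldl Δ q ∈ B) (hq : q ∉ B) :
    ∃ b : Bool, distB Δ B (Δ q b) < distB Δ B q := by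
  obtain ⟨l, hl⟩ := h
  have h' : ∃ m : ℕ, ∃ l : List Bool, l.length = m ∧ l.foldl Δ q ∈ B := ⟨l.length, l, rfl, hl⟩
  have hd : distB Δ B q = Nat.find h' := by rw [distB, dif_pos h']
  obtain ⟨l', hl', hmem⟩ := Nat.find_spec h'
  have hpos : 0 < distB Δ B q := distB_pos Δ B ⟨l, hl⟩ hq
  rcases l' with _ | ⟨b, l''⟩
  · rw [hd] at hpos
    simp at hl'
    omega
  · refine ⟨b, ?_⟩
    have h2 : ∃ m : ℕ, ∃ l : List Bool, l.length = m ∧ l.foldl Δ (Δ q b) ∈ B :=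
      ⟨l''.length, l'', rfl, by simpa using hmem⟩
    have : distB Δ B (Δ q b) ≤ l''.length := by
      rw [distB, dif_pos h2]
      exact Nat.find_le ⟨l'', rfl, by simpa using hmem⟩
    have hlen : l''.length + 1 = Nat.find h' := by simpa using hl'
    omega

noncomputable def gbitB (q : Q) : Bool :=
  if h : ∃ b : Bool, distB Δ B (Δ q b) < distB Δ B q then h.choose else false

theorem gbitB_spec {q : Q} (h : ∃ l : List Bool, l.foldl Δ q ∈ B) (hq : q ∉ B) :
    distB Δ B (Δ q (gbitB Δ B q)) < distB Δ B q := by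
  have h' := exists_gbit Δ B h hq
  rw [gbitB, dif_pos h']
  exact h'.choose_spec

end DB

section ST
variable {Q : Type} [DecidableEq Q] (Δ : Q → Bool → Q) (B : Finset Q) (s : Q)
  (κ w ϑ : ℝ) (L : ℕ) (x : ℕ → Bool)
noncomputable def stHR : ℕ → ℕ × ℝ
  | 0 => (0, 1)
  | t + 1 =>
    let p := stHR t
    if autoRun Δ s x t ∈ B then (p.1 + L, p.2)
    else (p.1 - 1, p.2 - κ * w ^ p.1 * ϑ ^ distB Δ B (autoRun Δ s x t) * p.2)
noncomputable def mm (t : ℕ) : ℝ :=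
  if autoRun Δ s x t ∈ B then 0
  else κ * w ^ (stHR Δ B s κ w ϑ L x t).1 * ϑ ^ distB Δ B (autoRun Δ s x t)
    * (stHR Δ B s κ w ϑ L x t).2
theorem stHR_succ_mem {t : ℕ} (h : autoRun Δ s x t ∈ B) :
    stHR Δ B s κ w ϑ L x (t + 1)
      = ((stHR Δ B s κ w ϑ L x t).1 + L, (stHR Δ B s κ w ϑ L x t).2) := by
  rw [stHR, if_pos h]
theorem stHR_succ_not_mem {t : ℕ} (h : autoRun Δ s x t ∉ B) :
    stHR Δ B s κ w ϑ L x (t + 1)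
      = ((stHR Δ B s κ w ϑ L x t).1 - 1,
          (stHR Δ B s κ w ϑ L x t).2 - mm Δ B s κ w ϑ L x t) := by
  rw [stHR, if_neg h, mm, if_neg h]
theorem stHR_snd_succ (t : ℕ) :
    (stHR Δ B s κ w ϑ L x (t + 1)).2
      = (stHR Δ B s κ w ϑ L x t).2 - mm Δ B s κ w ϑ L x t := by
  by_cases h : autoRun Δ s x t ∈ B
  · rw [stHR_succ_mem Δ B s κ w ϑ L x h, mm, if_pos h]; ring
  · rw [stHR_succ_not_mem Δ B s κ w ϑ L x h]

variable (hκ0 : 0 < κ) (hκ1 : κ ≤ 1) (hw0 : 0 < w) (hw1 : w ≤ 1) (hϑ0 : 0 < ϑ) (hϑ1 : ϑ ≤ 1)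

include hκ0 hκ1 hw0 hw1 hϑ0 hϑ1 in
theorem coeff_le_one (H d : ℕ) : 0 ≤ κ * w ^ H * ϑ ^ d ∧ κ * w ^ H * ϑ ^ d ≤ 1 := by
  constructor
  · positivity
  · have a : w ^ H ≤ 1 := pow_le_one₀ hw0.le hw1
    have b : ϑ ^ d ≤ 1 := pow_le_one₀ hϑ0.le hϑ1
    have a0 : (0:ℝ) ≤ w ^ H := by positivity
    have b0 : (0:ℝ) ≤ ϑ ^ d := by positivity
    exact mul_le_one₀ (mul_le_one₀ hκ1 a0 a) b0 b

include hκ0 hκ1 hw0 hw1 hϑ0 hϑ1 in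
theorem SR_nonneg : ∀ t, 0 ≤ (stHR Δ B s κ w ϑ L x t).2 := by
  intro t
  induction t with
  | zero => norm_num [stHR]
  | succ t ih =>
    rw [stHR_snd_succ]
    by_cases h : autoRun Δ s x t ∈ B
    · rw [mm, if_pos h]; linarith
    · rw [mm, if_neg h]
      have h2 := coeff_le_one κ w ϑ hκ0 hκ1 hw0 hw1 hϑ0 hϑ1
        (stHR Δ B s κ w ϑ L x t).1 (distB Δ B (autoRun Δ s x t))
      nlinarith [h2.1, h2.2]

include hκ0 hκ1 hw0 hw1 hϑ0 hϑ1 in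
theorem mm_nonneg (t : ℕ) : 0 ≤ mm Δ B s κ w ϑ L x t := by
  rw [mm]
  by_cases h : autoRun Δ s x t ∈ B
  · rw [if_pos h]
  · rw [if_neg h]
    have := SR_nonneg Δ B s κ w ϑ L x hκ0 hκ1 hw0 hw1 hϑ0 hϑ1 t
    positivity

include hκ0 hκ1 hw0 hw1 hϑ0 hϑ1 in
theorem mm_le_kSR (t : ℕ) : mm Δ B s κ w ϑ L x t ≤ κ * (stHR Δ B s κ w ϑ L x t).2 := by
  have hR := SR_nonneg Δ B s κ w ϑ L x hκ0 hκ1 hw0 hw1 hϑ0 hϑ1 t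
  rw [mm]
  by_cases h : autoRun Δ s x t ∈ B
  · rw [if_pos h]; positivity
  · rw [if_neg h]
    have h1 : w ^ (stHR Δ B s κ w ϑ L x t).1 * ϑ ^ distB Δ B (autoRun Δ s x t) ≤ 1 := by
      have a : w ^ (stHR Δ B s κ w ϑ L x t).1 ≤ 1 := pow_le_one₀ hw0.le hw1
      have b : ϑ ^ distB Δ B (autoRun Δ s x t) ≤ 1 := pow_le_one₀ hϑ0.le hϑ1
      have a0 : (0:ℝ) ≤ w ^ (stHR Δ B s κ w ϑ L x t).1 := by positivity
      have b0 : (0:ℝ) ≤ ϑ ^ distB Δ B (autoRun Δ s x t) := by positivity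
      nlinarith
    calc κ * w ^ (stHR Δ B s κ w ϑ L x t).1 * ϑ ^ distB Δ B (autoRun Δ s x t)
          * (stHR Δ B s κ w ϑ L x t).2
        = (w ^ (stHR Δ B s κ w ϑ L x t).1 * ϑ ^ distB Δ B (autoRun Δ s x t))
          * (κ * (stHR Δ B s κ w ϑ L x t).2) := by ring
      _ ≤ 1 * (κ * (stHR Δ B s κ w ϑ L x t).2) := by
          apply mul_le_mul_of_nonneg_right h1 (by positivity)
      _ = _ := by ring

theorem sum_mm (T : ℕ) :
    ∑ t ∈ Finset.range T, mm Δ B s κ w ϑ L x t = 1 - (stHR Δ B s κ w ϑ L x T).2 := by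
  induction T with
  | zero => simp [stHR]
  | succ T ih => rw [Finset.sum_range_succ, ih, stHR_snd_succ]; ring

include hκ0 hκ1 hw0 hw1 hϑ0 hϑ1 in
theorem SR_le_one (t : ℕ) : (stHR Δ B s κ w ϑ L x t).2 ≤ 1 := by
  have h := sum_mm Δ B s κ w ϑ L x t
  have h2 : 0 ≤ ∑ t' ∈ Finset.range t, mm Δ B s κ w ϑ L x t' :=
    Finset.sum_nonneg fun i _ => mm_nonneg Δ B s κ w ϑ L x hκ0 hκ1 hw0 hw1 hϑ0 hϑ1 i
  linarith

include hκ0 hκ1 hw0 hw1 hϑ0 hϑ1 in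
theorem summable_mm : Summable (mm Δ B s κ w ϑ L x) := by
  apply summable_of_sum_range_le (c := 1)
    (fun t => mm_nonneg Δ B s κ w ϑ L x hκ0 hκ1 hw0 hw1 hϑ0 hϑ1 t)
  intro T
  rw [sum_mm]
  have := SR_nonneg Δ B s κ w ϑ L x hκ0 hκ1 hw0 hw1 hϑ0 hϑ1 T
  linarith

include hκ0 hκ1 hw0 hw1 hϑ0 hϑ1 in
theorem tsum_mm_le_one : ∑' t, mm Δ B s κ w ϑ L x t ≤ 1 := by
  apply Summable.tsum_le_of_sum_range_le (summable_mm Δ B s κ w ϑ L x hκ0 hκ1 hw0 hw1 hϑ0 hϑ1)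
  intro T
  rw [sum_mm]
  have := SR_nonneg Δ B s κ w ϑ L x hκ0 hκ1 hw0 hw1 hϑ0 hϑ1 T
  linarith

noncomputable def phiV (t : ℕ) : ℝ :=
  w ^ (stHR Δ B s κ w ϑ L x t).1 * (stHR Δ B s κ w ϑ L x t).2

noncomputable def phiM (t : ℕ) : ℝ :=
  κ * w ^ (stHR Δ B s κ w ϑ L x t).1 * ϑ ^ distB Δ B (autoRun Δ s x t)
    * (stHR Δ B s κ w ϑ L x t).2

include hκ0 hκ1 hw0 hw1 hϑ0 hϑ1 in
theorem VS_bound (hwL : w ^ L ≤ 1/2) (hw3 : (L:ℝ) ≤ ((L:ℝ)+1) * w) (hL : 1 ≤ L)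
    (CL : ℝ) (hCL0 : 0 ≤ CL)
    (hCL : ∀ t, autoRun Δ s x t ∉ B →
      phiV Δ B s κ w ϑ L x t ≤ (L:ℝ) * CL * mm Δ B s κ w ϑ L x t) :
    ∀ T, (∑ t ∈ Finset.range T,
        if autoRun Δ s x t ∈ B then phiV Δ B s κ w ϑ L x t else 0)
      + 2 * phiV Δ B s κ w ϑ L x T ≤ 2 + 2 * CL * (1 - (stHR Δ B s κ w ϑ L x T).2) := by
  intro T
  induction T with
  | zero => simp [phiV, stHR]
  | succ T ih =>
    have hR := SR_nonneg Δ B s κ w ϑ L x hκ0 hκ1 hw0 hw1 hϑ0 hϑ1 T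
    have hR' := SR_nonneg Δ B s κ w ϑ L x hκ0 hκ1 hw0 hw1 hϑ0 hϑ1 (T+1)
    have hm := mm_nonneg Δ B s κ w ϑ L x hκ0 hκ1 hw0 hw1 hϑ0 hϑ1 T
    have hLpos : (0:ℝ) < (L:ℝ) := by exact_mod_cast hL
    rw [Finset.sum_range_succ]
    by_cases h : autoRun Δ s x T ∈ B
    · rw [if_pos h]
      have hsnd : (stHR Δ B s κ w ϑ L x (T+1)).2 = (stHR Δ B s κ w ϑ L x T).2 := by
        rw [stHR_succ_mem Δ B s κ w ϑ L x h]
      have hphi : phiV Δ B s κ w ϑ L x (T+1) ≤ (1/2) * phiV Δ B s κ w ϑ L x T := by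
        rw [phiV, phiV, stHR_succ_mem Δ B s κ w ϑ L x h]
        simp only
        rw [pow_add]
        have hwH : (0:ℝ) ≤ w ^ (stHR Δ B s κ w ϑ L x T).1 := by positivity
        calc w ^ (stHR Δ B s κ w ϑ L x T).1 * w ^ L * (stHR Δ B s κ w ϑ L x T).2
            ≤ w ^ (stHR Δ B s κ w ϑ L x T).1 * (1/2) * (stHR Δ B s κ w ϑ L x T).2 := by
              apply mul_le_mul_of_nonneg_right _ hR
              exact mul_le_mul_of_nonneg_left hwL hwH
          _ = (1/2) * (w ^ (stHR Δ B s κ w ϑ L x T).1 * (stHR Δ B s κ w ϑ L x T).2) := by ring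
      rw [hsnd]
      have hphi0 : 0 ≤ phiV Δ B s κ w ϑ L x T := by
        rw [phiV]; positivity
      linarith
    · rw [if_neg h]
      have hsnd : (stHR Δ B s κ w ϑ L x (T+1)).2
          = (stHR Δ B s κ w ϑ L x T).2 - mm Δ B s κ w ϑ L x T := stHR_snd_succ Δ B s κ w ϑ L x T
      have hgrow : (L:ℝ) * phiV Δ B s κ w ϑ L x (T+1) ≤ ((L:ℝ)+1) * phiV Δ B s κ w ϑ L x T := by
        rw [phiV, phiV, stHR_succ_not_mem Δ B s κ w ϑ L x h]
        simp only
        rcases Nat.eq_zero_or_pos (stHR Δ B s κ w ϑ L x T).1 with h0 | h0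
        · rw [h0]
          simp only [Nat.zero_sub, pow_zero, one_mul]
          have : (stHR Δ B s κ w ϑ L x T).2 - mm Δ B s κ w ϑ L x T
              ≤ 1 * (stHR Δ B s κ w ϑ L x T).2 := by linarith
          nlinarith [hR, hm]
        · have hw' : w ^ ((stHR Δ B s κ w ϑ L x T).1 - 1) * w = w ^ (stHR Δ B s κ w ϑ L x T).1 := by
            rw [← pow_succ]
            congr 1
            omega
          have hwH1 : (0:ℝ) ≤ w ^ ((stHR Δ B s κ w ϑ L x T).1 - 1) := by positivity
          calc (L:ℝ) * (w ^ ((stHR Δ B s κ w ϑ L x T).1 - 1)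
                * ((stHR Δ B s κ w ϑ L x T).2 - mm Δ B s κ w ϑ L x T))
              ≤ (L:ℝ) * (w ^ ((stHR Δ B s κ w ϑ L x T).1 - 1) * (stHR Δ B s κ w ϑ L x T).2) := by
                apply mul_le_mul_of_nonneg_left _ hLpos.le
                apply mul_le_mul_of_nonneg_left _ hwH1
                linarith
            _ ≤ (((L:ℝ)+1) * w) * (w ^ ((stHR Δ B s κ w ϑ L x T).1 - 1)
                  * (stHR Δ B s κ w ϑ L x T).2) := by
                apply mul_le_mul_of_nonneg_right hw3
                positivity
            _ = ((L:ℝ)+1) * (w ^ ((stHR Δ B s κ w ϑ L x T).1 - 1) * w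
                  * (stHR Δ B s κ w ϑ L x T).2) := by ring
            _ = ((L:ℝ)+1) * (w ^ (stHR Δ B s κ w ϑ L x T).1 * (stHR Δ B s κ w ϑ L x T).2) := by
                rw [hw']
      have hcl := hCL T h
      have hphi0 : 0 ≤ phiV Δ B s κ w ϑ L x T := by rw [phiV]; positivity
      have hstep : phiV Δ B s κ w ϑ L x (T+1) ≤ phiV Δ B s κ w ϑ L x T + CL * mm Δ B s κ w ϑ L x T := by
        have h1 : (L:ℝ) * phiV Δ B s κ w ϑ L x (T+1)
            ≤ (L:ℝ) * phiV Δ B s κ w ϑ L x T + (L:ℝ) * (CL * mm Δ B s κ w ϑ L x T) := by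
          calc (L:ℝ) * phiV Δ B s κ w ϑ L x (T+1) ≤ ((L:ℝ)+1) * phiV Δ B s κ w ϑ L x T := hgrow
            _ = (L:ℝ) * phiV Δ B s κ w ϑ L x T + phiV Δ B s κ w ϑ L x T := by ring
            _ ≤ (L:ℝ) * phiV Δ B s κ w ϑ L x T + (L:ℝ) * (CL * mm Δ B s κ w ϑ L x T) := by
                have := hcl
                linarith [hcl]
        nlinarith [h1, hLpos]
      rw [hsnd]
      linarith

include hκ0 hκ1 hw0 hw1 hϑ0 hϑ1 in
theorem main_bound (hacc : ∀ t, ∃ l : List Bool, l.foldl Δ (autoRun Δ s x t) ∈ B)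
    (A : ℝ) (hA0 : 0 ≤ A) (hA : (1 + A) * ϑ ≤ 1 - κ) :
    ∀ T, A * (∑ t ∈ Finset.range T,
        if autoRun Δ s x t ∉ B ∧ x t = gbitB Δ B (autoRun Δ s x t)
        then mm Δ B s κ w ϑ L x t else 0)
      + phiM Δ B s κ w ϑ L x 0
      ≤ phiM Δ B s κ w ϑ L x T
        + (∑ t ∈ Finset.range T,
            if autoRun Δ s x t ∉ B ∧ x t = !gbitB Δ B (autoRun Δ s x t)
            then mm Δ B s κ w ϑ L x t else 0)
        + κ * (∑ t ∈ Finset.range T,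
            if autoRun Δ s x t ∈ B then phiV Δ B s κ w ϑ L x t else 0) := by
  intro T
  induction T with
  | zero => simp
  | succ T ih =>
    have hR := SR_nonneg Δ B s κ w ϑ L x hκ0 hκ1 hw0 hw1 hϑ0 hϑ1 T
    have hR' := SR_nonneg Δ B s κ w ϑ L x hκ0 hκ1 hw0 hw1 hϑ0 hϑ1 (T+1)
    have hm := mm_nonneg Δ B s κ w ϑ L x hκ0 hκ1 hw0 hw1 hϑ0 hϑ1 T
    have hphiM0 : 0 ≤ phiM Δ B s κ w ϑ L x (T+1) := by
      rw [phiM]; positivity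
    rw [Finset.sum_range_succ, Finset.sum_range_succ, Finset.sum_range_succ]
    by_cases h : autoRun Δ s x T ∈ B
    · rw [if_neg (by simp [h]), if_neg (by simp [h]), if_pos h]
      have hd0 : distB Δ B (autoRun Δ s x T) = 0 := distB_of_mem Δ B h
      have heq : phiM Δ B s κ w ϑ L x T = κ * phiV Δ B s κ w ϑ L x T := by
        rw [phiM, phiV, hd0]
        ring
      linarith [ih]
    · by_cases hz : x T = gbitB Δ B (autoRun Δ s x T)
      · -- follow step
        rw [if_pos ⟨h, hz⟩, if_neg (by
            rintro ⟨-, h2⟩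
            rw [hz] at h2
            simp at h2), if_neg h]
        have key : (1 + A) * phiM Δ B s κ w ϑ L x T ≤ phiM Δ B s κ w ϑ L x (T+1) := by
          have hd1 : 1 ≤ distB Δ B (autoRun Δ s x T) := distB_pos Δ B (hacc T) h
          have hdlt : distB Δ B (autoRun Δ s x (T+1)) < distB Δ B (autoRun Δ s x T) := by
            have : autoRun Δ s x (T+1) = Δ (autoRun Δ s x T) (x T) := rfl
            rw [this, hz]
            exact gbitB_spec Δ B (hacc T) h
          have hwmono : w ^ (stHR Δ B s κ w ϑ L x T).1 ≤ w ^ ((stHR Δ B s κ w ϑ L x T).1 - 1) :=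
            pow_le_pow_of_le_one hw0.le hw1 (Nat.sub_le _ _)
          have hϑmono : ϑ ^ (distB Δ B (autoRun Δ s x T) - 1)
              ≤ ϑ ^ distB Δ B (autoRun Δ s x (T+1)) :=
            pow_le_pow_of_le_one hϑ0.le hϑ1 (by omega)
          have hSR' : (1 - κ) * (stHR Δ B s κ w ϑ L x T).2 ≤ (stHR Δ B s κ w ϑ L x (T+1)).2 := by
            rw [stHR_snd_succ]
            have := mm_le_kSR Δ B s κ w ϑ L x hκ0 hκ1 hw0 hw1 hϑ0 hϑ1 T
            linarith
          have hϑsplit : ϑ ^ distB Δ B (autoRun Δ s x T)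
              = ϑ ^ (distB Δ B (autoRun Δ s x T) - 1) * ϑ := by
            rw [← pow_succ]
            congr 1
            omega
          have hH' : (stHR Δ B s κ w ϑ L x (T+1)).1 = (stHR Δ B s κ w ϑ L x T).1 - 1 := by
            rw [stHR_succ_not_mem Δ B s κ w ϑ L x h]
          rw [phiM, phiM, hϑsplit, hH']
          have e1 : (0:ℝ) ≤ w ^ ((stHR Δ B s κ w ϑ L x T).1 - 1) := by positivity
          have e2 : (0:ℝ) ≤ ϑ ^ (distB Δ B (autoRun Δ s x T) - 1) := by positivity
          have e3 : (0:ℝ) ≤ ϑ ^ distB Δ B (autoRun Δ s x (T+1)) := by positivity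
          calc (1 + A) * (κ * w ^ (stHR Δ B s κ w ϑ L x T).1
                * (ϑ ^ (distB Δ B (autoRun Δ s x T) - 1) * ϑ) * (stHR Δ B s κ w ϑ L x T).2)
              = (κ * w ^ (stHR Δ B s κ w ϑ L x T).1 * ϑ ^ (distB Δ B (autoRun Δ s x T) - 1)
                  * (stHR Δ B s κ w ϑ L x T).2) * ((1 + A) * ϑ) := by ring
            _ ≤ (κ * w ^ (stHR Δ B s κ w ϑ L x T).1 * ϑ ^ (distB Δ B (autoRun Δ s x T) - 1)
                  * (stHR Δ B s κ w ϑ L x T).2) * (1 - κ) := by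
                apply mul_le_mul_of_nonneg_left hA
                positivity
            _ = κ * w ^ (stHR Δ B s κ w ϑ L x T).1 * ϑ ^ (distB Δ B (autoRun Δ s x T) - 1)
                  * ((1 - κ) * (stHR Δ B s κ w ϑ L x T).2) := by ring
            _ ≤ κ * w ^ ((stHR Δ B s κ w ϑ L x T).1 - 1) * ϑ ^ (distB Δ B (autoRun Δ s x T) - 1)
                  * ((1 - κ) * (stHR Δ B s κ w ϑ L x T).2) := by
                apply mul_le_mul_of_nonneg_right _ (by nlinarith)
                apply mul_le_mul_of_nonneg_right _ e2
                apply mul_le_mul_of_nonneg_left hwmono hκ0.le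
            _ ≤ κ * w ^ ((stHR Δ B s κ w ϑ L x T).1 - 1) * ϑ ^ distB Δ B (autoRun Δ s x (T+1))
                  * ((1 - κ) * (stHR Δ B s κ w ϑ L x T).2) := by
                apply mul_le_mul_of_nonneg_right _ (by nlinarith)
                apply mul_le_mul_of_nonneg_left hϑmono (by positivity)
            _ ≤ κ * w ^ ((stHR Δ B s κ w ϑ L x T).1 - 1) * ϑ ^ distB Δ B (autoRun Δ s x (T+1))
                  * (stHR Δ B s κ w ϑ L x (T+1)).2 := by
                apply mul_le_mul_of_nonneg_left hSR' (by positivity)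
        have hmeq : mm Δ B s κ w ϑ L x T = phiM Δ B s κ w ϑ L x T := by
          rw [mm, if_neg h, phiM]
        rw [hmeq]
        linarith [ih]
      · -- success step
        rw [if_neg (by rintro ⟨-, h2⟩; exact hz h2), if_pos ⟨h, by
            cases hxT : x T <;> cases hg : gbitB Δ B (autoRun Δ s x T) <;>
              simp_all⟩, if_neg h]
        have hmeq : mm Δ B s κ w ϑ L x T = phiM Δ B s κ w ϑ L x T := by
          rw [mm, if_neg h, phiM]
        rw [hmeq]
        linarith [ih]

theorem autoRun_congr {i : ℕ} {x x' : ℕ → Bool} (hx : ∀ j < i, x j = x' j) :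
    ∀ t ≤ i, autoRun Δ s x t = autoRun Δ s x' t := by
  intro t ht
  induction t with
  | zero => rfl
  | succ t ih =>
    show Δ (autoRun Δ s x t) (x t) = Δ (autoRun Δ s x' t) (x' t)
    rw [ih (by omega), hx t (by omega)]

theorem stHR_congr {i : ℕ} {x x' : ℕ → Bool} (hx : ∀ j < i, x j = x' j) :
    ∀ t ≤ i, stHR Δ B s κ w ϑ L x t = stHR Δ B s κ w ϑ L x' t := by
  intro t ht
  induction t with
  | zero => rfl
  | succ t ih =>
    rw [stHR, stHR, ih (by omega), autoRun_congr Δ s hx t (by omega)]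

include hκ0 hκ1 hw0 hw1 hϑ0 hϑ1 in
theorem exists_SR_small (N : ℕ) (hN : ∀ q, distB Δ B q ≤ N) (hL : 1 ≤ L)
    (hws : Filter.liminf
      (fun t : ℕ => (cars (fun t' => decide (autoRun Δ s x t' ∈ B)) t : ℝ) / t)
      Filter.atTop = 0)
    (ρ : ℝ) (hρ : 0 < ρ) : ∃ T, (stHR Δ B s κ w ϑ L x T).2 < ρ := by
  by_contra hcon
  push_neg at hcon
  set y : ℕ → Bool := fun t' => decide (autoRun Δ s x t' ∈ B) with hy
  set c0 : ℝ := κ * w * ϑ ^ N * ρ with hc0def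
  have hc0 : 0 < c0 := by positivity
  -- lower bound for mm at nonvisit low-H times
  have hmlow : ∀ t, autoRun Δ s x t ∉ B → (stHR Δ B s κ w ϑ L x t).1 ≤ 1 →
      c0 ≤ mm Δ B s κ w ϑ L x t := by
    intro t hv hH
    rw [mm, if_neg hv, hc0def]
    have h1 : w ≤ w ^ (stHR Δ B s κ w ϑ L x t).1 := by
      calc w = w ^ 1 := (pow_one w).symm
        _ ≤ w ^ (stHR Δ B s κ w ϑ L x t).1 := pow_le_pow_of_le_one hw0.le hw1 hH
    have h2 : ϑ ^ N ≤ ϑ ^ distB Δ B (autoRun Δ s x t) :=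
      pow_le_pow_of_le_one hϑ0.le hϑ1 (hN _)
    have h3 : ρ ≤ (stHR Δ B s κ w ϑ L x t).2 := hcon t
    gcongr
  -- step 2 : eventually, nonvisit states have H ≥ 2
  have hstep2 : ∃ t₁, ∀ t, t₁ ≤ t → autoRun Δ s x t ∉ B → 2 ≤ (stHR Δ B s κ w ϑ L x t).1 := by
    by_contra hc
    push_neg at hc
    have hgrow : ∀ k : ℕ, ∃ T, (k : ℝ) * c0 ≤ ∑ t ∈ Finset.range T, mm Δ B s κ w ϑ L x t := by
      intro k
      induction k with
      | zero => exact ⟨0, by simp⟩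
      | succ k ih =>
        obtain ⟨T, hT⟩ := ih
        obtain ⟨t, htT, hv, hH⟩ := hc T
        refine ⟨t + 1, ?_⟩
        rw [Finset.sum_range_succ]
        have h1 : ∑ t' ∈ Finset.range T, mm Δ B s κ w ϑ L x t'
            ≤ ∑ t' ∈ Finset.range t, mm Δ B s κ w ϑ L x t' := by
          apply Finset.sum_le_sum_of_subset_of_nonneg
          · exact Finset.range_subset_range.2 htT
          · intro i _ _
            exact mm_nonneg Δ B s κ w ϑ L x hκ0 hκ1 hw0 hw1 hϑ0 hϑ1 i
        have h2 := hmlow t hv (by omega)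
        push_cast
        linarith
    obtain ⟨k, hk⟩ := exists_nat_gt (1 / c0)
    obtain ⟨T, hT⟩ := hgrow k
    rw [sum_mm] at hT
    have h3 := hcon T
    have h4 : 1 < (k : ℝ) * c0 := by
      rw [div_lt_iff₀ hc0] at hk
      linarith
    linarith
  obtain ⟨t₁, ht₁⟩ := hstep2
  -- step 3 : H ≥ 1 from t₁ + 1 on
  have hstep3 : ∀ t, t₁ + 1 ≤ t → 1 ≤ (stHR Δ B s κ w ϑ L x t).1 := by
    intro t ht
    induction t with
    | zero => omega
    | succ t ih =>
      by_cases hv : autoRun Δ s x t ∈ B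
      · rw [stHR_succ_mem Δ B s κ w ϑ L x hv]
        simp only
        omega
      · have h2 : 2 ≤ (stHR Δ B s κ w ϑ L x t).1 := ht₁ t (by omega) hv
        rw [stHR_succ_not_mem Δ B s κ w ϑ L x hv]
        simp only
        omega
  -- step 4 : counting
  set t₂ := t₁ + 1 with ht₂
  set C : ℕ := t₂ + (stHR Δ B s κ w ϑ L x t₂).1 with hC
  have hstep4 : ∀ T, t₂ ≤ T → T + (stHR Δ B s κ w ϑ L x T).1 ≤ C + (L + 1) * cars y T := by
    intro T hT
    induction T with
    | zero => omega
    | succ T ih =>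
      rcases Nat.lt_or_ge T t₂ with h | h
      · have hTt : T + 1 = t₂ := by omega
        rw [hTt]
        omega
      · have ih' := ih h
        rw [cars_succ]
        by_cases hv : autoRun Δ s x T ∈ B
        · have hyT : y T = true := by simp [hy, hv]
          rw [if_pos hyT, stHR_succ_mem Δ B s κ w ϑ L x hv]
          simp only
          have hmul : (L + 1) * (cars y T + 1) = (L + 1) * cars y T + L + 1 := by ring
          omega
        · have hyT : ¬ y T = true := by simp [hy, hv]
          rw [if_neg hyT, stHR_succ_not_mem Δ B s κ w ϑ L x hv]
          simp only [Nat.add_zero]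
          have := hstep3 T (by omega)
          omega
  -- step 5 : contradiction with liminf = 0
  have hub : ∀ t, (cars y t : ℝ) / t ≤ 1 := by
    intro t
    rcases Nat.eq_zero_or_pos t with h | h
    · simp [h, cars]
    · rw [div_le_one (by exact_mod_cast h)]
      have : cars y t ≤ t := by
        calc cars y t ≤ (Finset.range t).card := Finset.card_filter_le _ _
          _ = t := Finset.card_range t
      exact_mod_cast this
  have hcob : Filter.IsCoboundedUnder (· ≥ ·) Filter.atTop (fun t : ℕ => (cars y t : ℝ) / t) :=
    (Filter.isBoundedUnder_of ⟨1, hub⟩).isCoboundedUnder_ge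
  set δ : ℝ := (2 * ((L : ℝ) + 1))⁻¹ with hδdef
  have hδ : 0 < δ := by positivity
  have hfreq : ∃ᶠ T in Filter.atTop, (cars y T : ℝ) / T < δ := by
    apply Filter.frequently_lt_of_liminf_lt hcob
    rw [hws]
    exact hδ
  obtain ⟨T, hTδ, hTbig⟩ :=
    (hfreq.and_eventually (Filter.eventually_ge_atTop (max t₂ (2 * C + 1)))).exists
  have hT₂ : t₂ ≤ T := le_trans (le_max_left _ _) hTbig
  have hTC : 2 * C + 1 ≤ T := le_trans (le_max_right _ _) hTbig
  have h4 := hstep4 T hT₂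
  have h5 : (T : ℝ) ≤ (C : ℝ) + ((L : ℝ) + 1) * (cars y T) := by
    have : (T : ℕ) ≤ C + (L + 1) * cars y T := by omega
    exact_mod_cast this
  have hTpos : (0 : ℝ) < T := by
    have : 0 < T := by omega
    exact_mod_cast this
  have h6 : (cars y T : ℝ) < δ * T := by
    rw [div_lt_iff₀ hTpos] at hTδ
    exact hTδ
  have h7 : ((L : ℝ) + 1) * δ = 1 / 2 := by
    rw [hδdef]
    have : ((L : ℝ) + 1) ≠ 0 := by positivity
    field_simp
  have h8 : ((L : ℝ) + 1) * (cars y T) < T / 2 := by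
    calc ((L : ℝ) + 1) * (cars y T) < ((L : ℝ) + 1) * (δ * T) := by
          apply mul_lt_mul_of_pos_left h6 (by positivity)
      _ = (((L : ℝ) + 1) * δ) * T := by ring
      _ = T / 2 := by rw [h7]; ring
  have hCT : (2 * (C:ℝ) + 1) ≤ T := by exact_mod_cast hTC
  linarith

set_option maxHeartbeats 1000000 in
/-- Theorem 4.1: if `B` is a strongly accessible set of states of a finite automaton
`M = (Q, s, Δ)` (accessible from every state accessible from `s`), then for every
`ε > 0` there is a bit-prediction strategy `S` with
`Succ^bp(S, A_{B,ws}) > 1 - ε`, where `A_{B,ws}` is the set of sequences `x` such that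
the characteristic sequence of `V_B(x) = {t ≥ 0 : q_t(x) ∈ B}` is weakly sparse. -/
theorem automaton_bit_prediction {Q : Type} [Fintype Q] [DecidableEq Q]
    (s : Q) (Δ : Q → Bool → Q) (B : Finset Q)
    (hsa : ∀ q : Q, (∃ l : List Bool, l.foldl Δ s = q) →
      ∃ l : List Bool, l.foldl Δ q ∈ B)
    (ε : ℝ) (hε : 0 < ε) :
    ∃ S : BitPredStrategy, ∃ c : ℝ, 1 - ε < c ∧
      ∀ x : ℕ → Bool,
        weaklySparse (fun t => decide (autoRun Δ s x t ∈ B)) →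
        c ≤ succBP S x := by
  -- parameters
  set e : ℝ := min ε 1 / 2 with hedef
  have he0 : 0 < e := by
    have : 0 < min ε 1 := lt_min hε one_pos
    rw [hedef]; linarith
  have he2 : e ≤ 1 / 2 := by
    have : min ε 1 ≤ 1 := min_le_right _ _
    rw [hedef]; linarith
  have heε : e < ε := by
    have : min ε 1 ≤ ε := min_le_left _ _
    rw [hedef]; linarith
  set κ : ℝ := e / 100 with hκdef
  have hκ0 : 0 < κ := by rw [hκdef]; linarith
  have hκ1 : κ ≤ 1 := by rw [hκdef]; linarith
  have hκhalf : κ ≤ 1 / 200 := by rw [hκdef]; linarith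
  set ϑ : ℝ := (1 - κ) * e / (e + 8) with hϑdef
  have hϑ0 : 0 < ϑ := by
    rw [hϑdef]
    apply div_pos
    · nlinarith
    · linarith
  have hϑ1 : ϑ ≤ 1 := by
    rw [hϑdef, div_le_one (by linarith)]
    nlinarith
  set N : ℕ := Finset.univ.sup (distB Δ B) with hNdef
  have hN : ∀ q, distB Δ B q ≤ N := fun q => Finset.le_sup (Finset.mem_univ q)
  set L : ℕ := max 1 (Nat.ceil ((ϑ⁻¹) ^ N / κ)) with hLdef
  have hL : 1 ≤ L := le_max_left _ _
  have hLpos : (0 : ℝ) < (L : ℝ) := by exact_mod_cast hL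
  have hLge : (ϑ⁻¹) ^ N / κ ≤ (L : ℝ) :=
    le_trans (Nat.le_ceil _) (Nat.cast_le.2 (le_max_right _ _))
  set w : ℝ := (1 / 2 : ℝ) ^ ((L : ℝ)⁻¹) with hwdef
  have hw0 : 0 < w := by
    rw [hwdef]
    exact Real.rpow_pos_of_pos (by norm_num) _
  have hw1 : w ≤ 1 := by
    rw [hwdef]
    exact Real.rpow_le_one (by norm_num) (by norm_num) (by positivity)
  have hwLeq : w ^ L = 1 / 2 := by
    rw [hwdef, ← Real.rpow_natCast ((1 / 2 : ℝ) ^ ((L : ℝ)⁻¹)) L,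
      ← Real.rpow_mul (by norm_num : (0:ℝ) ≤ 1 / 2),
      inv_mul_cancel₀ (ne_of_gt hLpos), Real.rpow_one]
  have hwL : w ^ L ≤ 1 / 2 := le_of_eq hwLeq
  have hw3 : (L : ℝ) ≤ ((L : ℝ) + 1) * w := by
    have hbern : (2 : ℝ) ≤ (1 + 1 / (L : ℝ)) ^ L := by
      have h := one_add_mul_le_pow
        (le_trans (by norm_num : (-2:ℝ) ≤ 0) (by positivity : (0:ℝ) ≤ 1 / (L : ℝ))) L
      rw [mul_one_div, div_self (ne_of_gt hLpos)] at h
      linarith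
    have h1 : ((L : ℝ) / ((L : ℝ) + 1)) ^ L ≤ w ^ L := by
      rw [hwLeq]
      have heq : (L : ℝ) / ((L : ℝ) + 1) = (1 + 1 / (L : ℝ))⁻¹ := by
        field_simp
      rw [heq, inv_pow, ← one_div]
      exact one_div_le_one_div_of_le (by norm_num) hbern
    have key : (L : ℝ) / ((L : ℝ) + 1) ≤ w :=
      (pow_le_pow_iff_left₀ (by positivity) hw0.le (by omega)).1 h1
    rw [div_le_iff₀ (by positivity)] at key
    linarith
  set A : ℝ := 8 / e with hAdef
  have hA0 : 0 ≤ A := by positivity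
  have hA : (1 + A) * ϑ ≤ 1 - κ := by
    have : (1 + A) * ϑ = 1 - κ := by
      rw [hAdef, hϑdef]
      field_simp
    linarith [this]
  set CL : ℝ := ((L : ℝ) * κ * ϑ ^ N)⁻¹ with hCLdef
  have hCL0 : 0 ≤ CL := by positivity
  have hκCL : κ * CL ≤ κ := by
    have hϑN : (0 : ℝ) < ϑ ^ N := by positivity
    have h2 : ((ϑ ^ N)⁻¹ / κ) * ϑ ^ N ≤ (L : ℝ) * ϑ ^ N := by
      apply mul_le_mul_of_nonneg_right _ hϑN.le
      rw [← inv_pow]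
      exact hLge
    have h3 : ((ϑ ^ N)⁻¹ / κ) * ϑ ^ N = κ⁻¹ := by field_simp
    rw [h3] at h2
    have h4 : κ * CL = ((L : ℝ) * ϑ ^ N)⁻¹ := by
      rw [hCLdef]
      field_simp
    rw [h4]
    have h5 : (0 : ℝ) < (L : ℝ) * ϑ ^ N := by positivity
    rw [inv_le_comm₀ h5 hκ0]
    exact h2
  -- the strategy
  refine ⟨⟨fun x o =>
      Option.rec (1 - ∑' t, mm Δ B s κ w ϑ L x t)
        (fun p => if autoRun Δ s x p.1 ∉ B ∧ p.2 = !gbitB Δ B (autoRun Δ s x p.1)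
          then mm Δ B s κ w ϑ L x p.1 else 0) o, ?_, ?_, ?_⟩, 1 - e, by linarith, ?_⟩
  · -- nonneg
    rintro x (_ | ⟨i, z⟩)
    · have := tsum_mm_le_one Δ B s κ w ϑ L x hκ0 hκ1 hw0 hw1 hϑ0 hϑ1
      simpa using by linarith
    · dsimp only
      split
      · exact mm_nonneg Δ B s κ w ϑ L x hκ0 hκ1 hw0 hw1 hϑ0 hϑ1 i
      · exact le_refl 0
  · -- total
    intro x
    set g : ℕ × Bool → ℝ := fun p =>
      if autoRun Δ s x p.1 ∉ B ∧ p.2 = !gbitB Δ B (autoRun Δ s x p.1)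
        then mm Δ B s κ w ϑ L x p.1 else 0 with hgdef
    have hg0 : ∀ p, 0 ≤ g p := by
      intro p
      rw [hgdef]
      dsimp only
      split
      · exact mm_nonneg Δ B s κ w ϑ L x hκ0 hκ1 hw0 hw1 hϑ0 hϑ1 p.1
      · exact le_refl 0
    have hfib : ∀ i : ℕ, g (i, false) + g (i, true) = mm Δ B s κ w ϑ L x i := by
      intro i
      rw [hgdef]
      by_cases h : autoRun Δ s x i ∈ B
      · simp [h, mm]
      · cases hg : gbitB Δ B (autoRun Δ s x i) <;> simp [h, hg]
    have hfibsum : ∀ i : ℕ, Summable fun z => g (i, z) := fun i => (hasSum_fintype _).summable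
    have hgsum : Summable g := by
      rw [summable_prod_of_nonneg hg0]
      refine ⟨hfibsum, ?_⟩
      have heq : (fun i => ∑' z, g (i, z)) = mm Δ B s κ w ϑ L x := by
        funext i
        rw [tsum_bool, hfib i]
      rw [heq]
      exact summable_mm Δ B s κ w ϑ L x hκ0 hκ1 hw0 hw1 hϑ0 hϑ1
    have htsum_pairs : ∑' p : ℕ × Bool, g p = ∑' t, mm Δ B s κ w ϑ L x t := by
      rw [hgsum.tsum_prod' hfibsum]
      exact tsum_congr fun i => by rw [tsum_bool, hfib i]
    set g2 : Option (ℕ × Bool) → ℝ := fun o => Option.rec 0 g o with hg2def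
    have hg2sum : Summable g2 := by
      apply ((Option.some_injective _).summable_iff ?_).1
      · exact hgsum
      · rintro (_ | p) ho
        · rfl
        · exact absurd (Set.mem_range_self p) ho
    have hsupp : Function.support g2 ⊆ Set.range some := by
      intro o ho
      rcases o with _ | p
      · exact absurd rfl ho
      · exact ⟨p, rfl⟩
    have hg2tsum : ∑' o, g2 o = ∑' p : ℕ × Bool, g p := by
      have h := (Option.some_injective (ℕ × Bool)).tsum_eq (f := g2) hsupp
      rw [← h]
    set h1 : Option (ℕ × Bool) → ℝ := fun o =>
      if o = none then (1 - ∑' t, mm Δ B s κ w ϑ L x t) else 0 with hh1def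
    have hh1sum : Summable h1 := ⟨_, hasSum_ite_eq none _⟩
    have hPP : ∀ o : Option (ℕ × Bool),
        (Option.rec (motive := fun _ => ℝ) (1 - ∑' t, mm Δ B s κ w ϑ L x t)
          (fun p => if autoRun Δ s x p.1 ∉ B ∧ p.2 = !gbitB Δ B (autoRun Δ s x p.1)
            then mm Δ B s κ w ϑ L x p.1 else 0) o) = h1 o + g2 o := by
      rintro (_ | p)
      · simp [hh1def, hg2def]
      · simp [hh1def, hg2def, hgdef]
    have goal_eq : (∑' (o : Option (ℕ × Bool)), (h1 o + g2 o)) = 1 := by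
      rw [hh1sum.tsum_add hg2sum, hg2tsum, htsum_pairs, hh1def]
      rw [tsum_ite_eq]
      ring
    exact (tsum_congr hPP).trans goal_eq
  · -- adapted
    intro x x' i z hx
    dsimp only
    have hq : autoRun Δ s x i = autoRun Δ s x' i := autoRun_congr Δ s hx i le_rfl
    have hst : stHR Δ B s κ w ϑ L x i = stHR Δ B s κ w ϑ L x' i :=
      stHR_congr Δ B s κ w ϑ L hx i le_rfl
    rw [mm, mm, hq, hst]
  · -- the success bound
    intro x hws
    have hreach : ∀ t, ∃ l : List Bool, l.foldl Δ s = autoRun Δ s x t := by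
      intro t
      induction t with
      | zero => exact ⟨[], rfl⟩
      | succ t ih =>
        obtain ⟨l, hl⟩ := ih
        exact ⟨l ++ [x t], by rw [List.foldl_append, hl]; rfl⟩
    have hacc : ∀ t, ∃ l : List Bool, l.foldl Δ (autoRun Δ s x t) ∈ B :=
      fun t => hsa _ (hreach t)
    have hCLineq : ∀ t, autoRun Δ s x t ∉ B →
        phiV Δ B s κ w ϑ L x t ≤ (L : ℝ) * CL * mm Δ B s κ w ϑ L x t := by
      intro t hv
      have hLCL : (L : ℝ) * CL = (κ * ϑ ^ N)⁻¹ := by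
        rw [hCLdef]
        field_simp
      rw [hLCL]
      have hmge : κ * ϑ ^ N * phiV Δ B s κ w ϑ L x t ≤ mm Δ B s κ w ϑ L x t := by
        rw [mm, if_neg hv, phiV]
        have h2 : ϑ ^ N ≤ ϑ ^ distB Δ B (autoRun Δ s x t) :=
          pow_le_pow_of_le_one hϑ0.le hϑ1 (hN _)
        have hR := SR_nonneg Δ B s κ w ϑ L x hκ0 hκ1 hw0 hw1 hϑ0 hϑ1 t
        have hwH : (0:ℝ) ≤ w ^ (stHR Δ B s κ w ϑ L x t).1 := by positivity
        calc κ * ϑ ^ N * (w ^ (stHR Δ B s κ w ϑ L x t).1 * (stHR Δ B s κ w ϑ L x t).2)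
            = (κ * w ^ (stHR Δ B s κ w ϑ L x t).1 * (stHR Δ B s κ w ϑ L x t).2) * ϑ ^ N := by
              ring
          _ ≤ (κ * w ^ (stHR Δ B s κ w ϑ L x t).1 * (stHR Δ B s κ w ϑ L x t).2)
                * ϑ ^ distB Δ B (autoRun Δ s x t) := by
              apply mul_le_mul_of_nonneg_left h2 (by positivity)
          _ = κ * w ^ (stHR Δ B s κ w ϑ L x t).1 * ϑ ^ distB Δ B (autoRun Δ s x t)
                * (stHR Δ B s κ w ϑ L x t).2 := by ring
      rw [le_inv_mul_iff₀ (by positivity)]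
      exact hmge
    obtain ⟨T, hT⟩ := exists_SR_small Δ B s κ w ϑ L x hκ0 hκ1 hw0 hw1 hϑ0 hϑ1 N hN hL hws
      (e / 8) (by linarith)
    set lostT : ℝ := ∑ t ∈ Finset.range T,
      (if autoRun Δ s x t ∉ B ∧ x t = gbitB Δ B (autoRun Δ s x t)
        then mm Δ B s κ w ϑ L x t else 0) with hlostdef
    set succT : ℝ := ∑ t ∈ Finset.range T,
      (if autoRun Δ s x t ∉ B ∧ x t = !gbitB Δ B (autoRun Δ s x t)
        then mm Δ B s κ w ϑ L x t else 0) with hsuccdef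
    set VST : ℝ := ∑ t ∈ Finset.range T,
      (if autoRun Δ s x t ∈ B then phiV Δ B s κ w ϑ L x t else 0) with hVSdef
    have h9 := main_bound Δ B s κ w ϑ L x hκ0 hκ1 hw0 hw1 hϑ0 hϑ1 hacc A hA0 hA T
    have hVS := VS_bound Δ B s κ w ϑ L x hκ0 hκ1 hw0 hw1 hϑ0 hϑ1 hwL hw3 hL CL hCL0 hCLineq T
    have hSRT0 := SR_nonneg Δ B s κ w ϑ L x hκ0 hκ1 hw0 hw1 hϑ0 hϑ1 T
    have hphiV0 : 0 ≤ phiV Δ B s κ w ϑ L x T := by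
      rw [phiV]
      exact mul_nonneg (pow_nonneg hw0.le _) hSRT0
    have hVS' : VST ≤ 2 + 2 * CL := by
      have h1 : 2 * CL * (1 - (stHR Δ B s κ w ϑ L x T).2) ≤ 2 * CL := by nlinarith
      linarith [hVS]
    have hphiM0 : 0 ≤ phiM Δ B s κ w ϑ L x 0 := by
      rw [phiM]
      have h0 := SR_nonneg Δ B s κ w ϑ L x hκ0 hκ1 hw0 hw1 hϑ0 hϑ1 0
      exact mul_nonneg (by positivity) h0
    have hphiMT : phiM Δ B s κ w ϑ L x T ≤ κ := by
      rw [phiM]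
      have h1 : w ^ (stHR Δ B s κ w ϑ L x T).1 ≤ 1 := pow_le_one₀ hw0.le hw1
      have h2 : ϑ ^ distB Δ B (autoRun Δ s x T) ≤ 1 := pow_le_one₀ hϑ0.le hϑ1
      have h3 := SR_le_one Δ B s κ w ϑ L x hκ0 hκ1 hw0 hw1 hϑ0 hϑ1 T
      have h4 : (0:ℝ) ≤ w ^ (stHR Δ B s κ w ϑ L x T).1 := by positivity
      have h5 : (0:ℝ) ≤ ϑ ^ distB Δ B (autoRun Δ s x T) := by positivity
      have h6 : w ^ (stHR Δ B s κ w ϑ L x T).1 * ϑ ^ distB Δ B (autoRun Δ s x T)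
          * (stHR Δ B s κ w ϑ L x T).2 ≤ 1 :=
        mul_le_one₀ (mul_le_one₀ h1 h5 h2) hSRT0 h3
      calc κ * w ^ (stHR Δ B s κ w ϑ L x T).1 * ϑ ^ distB Δ B (autoRun Δ s x T)
            * (stHR Δ B s κ w ϑ L x T).2
          = κ * (w ^ (stHR Δ B s κ w ϑ L x T).1 * ϑ ^ distB Δ B (autoRun Δ s x T)
            * (stHR Δ B s κ w ϑ L x T).2) := by ring
        _ ≤ κ * 1 := mul_le_mul_of_nonneg_left h6 hκ0.le
        _ = κ := mul_one κ
    have hterm : ∀ t ∈ Finset.range T,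
        (if autoRun Δ s x t ∉ B ∧ x t = gbitB Δ B (autoRun Δ s x t)
          then mm Δ B s κ w ϑ L x t else 0)
        + (if autoRun Δ s x t ∉ B ∧ x t = !gbitB Δ B (autoRun Δ s x t)
          then mm Δ B s κ w ϑ L x t else 0) = mm Δ B s κ w ϑ L x t := by
      intro t _
      by_cases h : autoRun Δ s x t ∈ B
      · simp [h, mm]
      · cases hg : gbitB Δ B (autoRun Δ s x t) <;> cases hxt : x t <;> simp [h, hg, hxt]
    have hsplitsum : lostT + succT = 1 - (stHR Δ B s κ w ϑ L x T).2 := by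
      rw [hlostdef, hsuccdef, ← Finset.sum_add_distrib, Finset.sum_congr rfl hterm,
        sum_mm]
    have hlost0 : 0 ≤ lostT := by
      rw [hlostdef]
      apply Finset.sum_nonneg
      intro t _
      split
      · exact mm_nonneg Δ B s κ w ϑ L x hκ0 hκ1 hw0 hw1 hϑ0 hϑ1 t
      · exact le_refl 0
    have hsucc0 : 0 ≤ succT := by
      rw [hsuccdef]
      apply Finset.sum_nonneg
      intro t _
      split
      · exact mm_nonneg Δ B s κ w ϑ L x hκ0 hκ1 hw0 hw1 hϑ0 hϑ1 t
      · exact le_refl 0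
    have hA9 : A * lostT ≤ succT + 5 * κ := by
      have h1 : κ * VST ≤ κ * (2 + 2 * CL) :=
        mul_le_mul_of_nonneg_left hVS' hκ0.le
      have h2 : κ * (2 + 2 * CL) = 2 * κ + 2 * (κ * CL) := by ring
      linarith only [h9, hphiM0, hphiMT, hκCL, h1, h2]
    clear_value e κ ϑ N L w A CL lostT succT VST
    -- transfer to succBP
    have hsmnonneg : ∀ t, 0 ≤ (if autoRun Δ s x t ∉ B ∧ x t = !gbitB Δ B (autoRun Δ s x t)
        then mm Δ B s κ w ϑ L x t else 0) := by
      intro t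
      split
      · exact mm_nonneg Δ B s κ w ϑ L x hκ0 hκ1 hw0 hw1 hϑ0 hϑ1 t
      · exact le_refl 0
    have hsmsummable : Summable (fun t => (if autoRun Δ s x t ∉ B ∧ x t = !gbitB Δ B (autoRun Δ s x t)
        then mm Δ B s κ w ϑ L x t else 0)) := by
      apply Summable.of_nonneg_of_le hsmnonneg _
        (summable_mm Δ B s κ w ϑ L x hκ0 hκ1 hw0 hw1 hϑ0 hϑ1)
      intro t
      split
      · exact le_refl _
      · exact mm_nonneg Δ B s κ w ϑ L x hκ0 hκ1 hw0 hw1 hϑ0 hϑ1 t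
    have hge : succT ≤ ∑' t, (if autoRun Δ s x t ∉ B ∧ x t = !gbitB Δ B (autoRun Δ s x t)
        then mm Δ B s κ w ϑ L x t else 0) := by
      rw [hsuccdef]
      exact Summable.sum_le_tsum (Finset.range T) (fun t _ => hsmnonneg t) hsmsummable
    -- final numeric computation
    have h8lost : 8 * lostT ≤ e * succT + 5 * κ * e := by
      have hmul := mul_le_mul_of_nonneg_left hA9 he0.le
      have h81 : e * (A * lostT) = 8 * lostT := by
        rw [hAdef]
        field_simp
      rw [h81] at hmul
      linarith only [hmul]
    have hfinal : 1 - e ≤ succT := by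
      have h5κ : 5 * κ * e = e * e / 20 := by rw [hκdef]; ring
      have h8 : 8 * (1 - (stHR Δ B s κ w ϑ L x T).2 - succT) ≤ e * succT + e * e / 20 := by
        rw [← h5κ]
        linarith only [h8lost, hsplitsum]
      have hr2 : (stHR Δ B s κ w ϑ L x T).2 < e / 8 := hT
      have hr3 : 0 ≤ (stHR Δ B s κ w ϑ L x T).2 := hSRT0
      generalize hgen : (stHR Δ B s κ w ϑ L x T).2 = r at h8 hr2 hr3
      nlinarith only [h8, hr2, hr3, he0, he2, hsucc0]
    calc (1:ℝ) - e ≤ succT := hfinal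
      _ ≤ ∑' t, (if autoRun Δ s x t ∉ B ∧ x t = !gbitB Δ B (autoRun Δ s x t)
          then mm Δ B s κ w ϑ L x t else 0) := hge
      _ = _ := rfl
end ST
end

section
/- For every δ > 0 there exists a bit-prediction strategy P such that Succ^bp(P, A_{ws} ∪ A_{co-ws}) > 1 − δ, and moreover P has the safety property that for every x ∈ {0,1}^ω the probability that P outputs an incorrect prediction, namely Σ_{i ∈ ℕ} π_{P,x}((i, 1 − x_i)), is at most δ. -/
namespace BPaux
noncomputable section

def rho (d : ℝ) (s : ℤ) : ℝ := (1 + d / 32) ^ (min s 0)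
def hh (d : ℝ) (s : ℤ) : ℝ := 2 * (1 + d / 32) ^ (min s 0) + d / 16 * ((max s 0 : ℤ) : ℝ)
def sig (M : ℕ) (x : ℕ → Bool) (t : ℕ) : ℤ := (t : ℤ) - (M : ℤ) * ((cars x t : ℤ) + 1)

def state (d : ℝ) (M : ℕ) (x : ℕ → Bool) : ℕ → ℝ × ℝ × ℝ
  | 0 => (d / 4, d / 4, 1)
  | t + 1 =>
      let p := state d M x t
      let a0 := 2⁻¹ * rho d (sig M x t) * p.1 * p.2.2
      let a1 := 2⁻¹ * rho d (sig M (fun i => !x i) t) * p.2.1 * p.2.2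
      (if x t then p.1 - a0 else p.1,
       if x t then p.2.1 else p.2.1 - a1,
       p.2.2 - a0 - a1)

def R0 (d : ℝ) (M : ℕ) (x : ℕ → Bool) (t : ℕ) : ℝ := (state d M x t).1
def R1 (d : ℝ) (M : ℕ) (x : ℕ → Bool) (t : ℕ) : ℝ := (state d M x t).2.1
def Sb (d : ℝ) (M : ℕ) (x : ℕ → Bool) (t : ℕ) : ℝ := (state d M x t).2.2
def w0 (d : ℝ) (M : ℕ) (x : ℕ → Bool) (t : ℕ) : ℝ :=
  2⁻¹ * rho d (sig M x t) * R0 d M x t * Sb d M x t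
def w1 (d : ℝ) (M : ℕ) (x : ℕ → Bool) (t : ℕ) : ℝ :=
  2⁻¹ * rho d (sig M (fun i => !x i) t) * R1 d M x t * Sb d M x t

variable {d : ℝ} {M : ℕ} {x x' : ℕ → Bool}

lemma R0_zero : R0 d M x 0 = d / 4 := rfl
lemma R1_zero : R1 d M x 0 = d / 4 := rfl
lemma Sb_zero : Sb d M x 0 = 1 := rfl
lemma R0_succ (t : ℕ) :
    R0 d M x (t + 1) = if x t then R0 d M x t - w0 d M x t else R0 d M x t := rfl
lemma R1_succ (t : ℕ) :
    R1 d M x (t + 1) = if x t then R1 d M x t else R1 d M x t - w1 d M x t := rfl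
lemma Sb_succ (t : ℕ) :
    Sb d M x (t + 1) = Sb d M x t - w0 d M x t - w1 d M x t := rfl

lemma gamma_pos (hd : 0 < d) : (0:ℝ) < 1 + d / 32 := by linarith
lemma rho_pos (hd : 0 < d) (s : ℤ) : 0 < rho d s := zpow_pos (gamma_pos hd) _
lemma rho_le_one (hd : 0 < d) (s : ℤ) : rho d s ≤ 1 :=
  zpow_le_one_of_nonpos₀ (by linarith) (min_le_right s 0)

/-- all the basic bounds on the state, by induction. -/
lemma bounds (hd : 0 < d) (hd1 : d ≤ 1) (t : ℕ) :
    0 < R0 d M x t ∧ R0 d M x t ≤ d / 4 ∧ 0 < R1 d M x t ∧ R1 d M x t ≤ d / 4 ∧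
      0 < Sb d M x t ∧ Sb d M x t ≤ 1 := by
  induction t with
  | zero =>
      refine ⟨by rw [R0_zero]; linarith, le_of_eq R0_zero, by rw [R1_zero]; linarith,
        le_of_eq R1_zero, by rw [Sb_zero]; norm_num, le_of_eq Sb_zero⟩
  | succ t ih =>
      obtain ⟨h1, h2, h3, h4, h5, h6⟩ := ih
      have hρ0p := rho_pos hd (sig M x t)
      have hρ0l := rho_le_one hd (sig M x t)
      have hρ1p := rho_pos hd (sig M (fun i => !x i) t)
      have hρ1l := rho_le_one hd (sig M (fun i => !x i) t)
      have hw0a : 0 < w0 d M x t := by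
        rw [w0]; positivity
      have hw1a : 0 < w1 d M x t := by
        rw [w1]; positivity
      have hρS0 : rho d (sig M x t) * Sb d M x t ≤ 1 :=
        mul_le_one₀ hρ0l (le_of_lt h5) h6
      have hρS1 : rho d (sig M (fun i => !x i) t) * Sb d M x t ≤ 1 :=
        mul_le_one₀ hρ1l (le_of_lt h5) h6
      have hw0b : w0 d M x t ≤ 2⁻¹ * R0 d M x t := by
        rw [w0]
        nlinarith [mul_le_mul_of_nonneg_left hρS0 (le_of_lt h1)]
      have hw1b : w1 d M x t ≤ 2⁻¹ * R1 d M x t := by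
        rw [w1]
        nlinarith [mul_le_mul_of_nonneg_left hρS1 (le_of_lt h3)]
      have hq0 : rho d (sig M x t) * R0 d M x t ≤ 1 * (d / 4) :=
        mul_le_mul hρ0l h2 (le_of_lt h1) zero_le_one
      have hq1 : rho d (sig M (fun i => !x i) t) * R1 d M x t ≤ 1 * (d / 4) :=
        mul_le_mul hρ1l h4 (le_of_lt h3) zero_le_one
      have hw0c : w0 d M x t ≤ 2⁻¹ * (d / 4) * Sb d M x t := by
        rw [w0]
        nlinarith [mul_le_mul_of_nonneg_right hq0 (le_of_lt h5)]
      have hw1c : w1 d M x t ≤ 2⁻¹ * (d / 4) * Sb d M x t := by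
        rw [w1]
        nlinarith [mul_le_mul_of_nonneg_right hq1 (le_of_lt h5)]
      refine ⟨?_, ?_, ?_, ?_, ?_, ?_⟩
      · rw [R0_succ]; split <;> linarith
      · rw [R0_succ]; split <;> linarith
      · rw [R1_succ]; split <;> linarith
      · rw [R1_succ]; split <;> linarith
      · rw [Sb_succ]; nlinarith
      · rw [Sb_succ]; linarith

lemma w0_pos (hd : 0 < d) (hd1 : d ≤ 1) (t : ℕ) : 0 < w0 d M x t := by
  obtain ⟨h1, _, _, _, h5, _⟩ := bounds (x := x) (M := M) hd hd1 t
  have := rho_pos hd (sig M x t)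
  rw [w0]; positivity

lemma w1_pos (hd : 0 < d) (hd1 : d ≤ 1) (t : ℕ) : 0 < w1 d M x t := by
  obtain ⟨_, _, h3, _, h5, _⟩ := bounds (x := x) (M := M) hd hd1 t
  have := rho_pos hd (sig M (fun i => !x i) t)
  rw [w1]; positivity

lemma Sb_succ_le (hd : 0 < d) (hd1 : d ≤ 1) (t : ℕ) : Sb d M x (t + 1) ≤ Sb d M x t := by
  rw [Sb_succ]
  have := w0_pos (x := x) (M := M) hd hd1 t
  have := w1_pos (x := x) (M := M) hd hd1 t
  linarith

lemma Sb_mono (hd : 0 < d) (hd1 : d ≤ 1) {s t : ℕ} (h : s ≤ t) : Sb d M x t ≤ Sb d M x s :=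
  antitone_nat_of_succ_le (fun t => Sb_succ_le hd hd1 t) h

lemma R0_succ_le (hd : 0 < d) (hd1 : d ≤ 1) (t : ℕ) : R0 d M x (t + 1) ≤ R0 d M x t := by
  rw [R0_succ]
  have := w0_pos (x := x) (M := M) hd hd1 t
  split <;> linarith

/-- telescoping identities -/
lemma sum_w_eq (T : ℕ) :
    ∑ t ∈ Finset.range T, (w0 d M x t + w1 d M x t) = 1 - Sb d M x T := by
  induction T with
  | zero => simp [Sb_zero]
  | succ T ih => rw [Finset.sum_range_succ, ih, Sb_succ]; ring

lemma sum_e0_eq (T : ℕ) :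
    ∑ t ∈ Finset.range T, (if x t then w0 d M x t else 0) = d / 4 - R0 d M x T := by
  induction T with
  | zero => simp [R0_zero]
  | succ T ih =>
      rw [Finset.sum_range_succ, ih, R0_succ]
      split <;> ring

lemma sum_e1_eq (T : ℕ) :
    ∑ t ∈ Finset.range T, (if x t then 0 else w1 d M x t) = d / 4 - R1 d M x T := by
  induction T with
  | zero => simp [R1_zero]
  | succ T ih =>
      rw [Finset.sum_range_succ, ih, R1_succ]
      split <;> ring

lemma hh_nonneg (hd : 0 < d) (s : ℤ) : 0 ≤ hh d s := by
  have h1 : (0:ℝ) < (1 + d / 32) ^ (min s 0) := zpow_pos (gamma_pos hd) _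
  have h2 : (0:ℝ) ≤ ((max s 0 : ℤ) : ℝ) := by exact_mod_cast le_max_right s 0
  have h3 : (0:ℝ) ≤ d / 16 := by linarith
  rw [hh]
  nlinarith

lemma hh_succ (hd : 0 < d) (s : ℤ) : hh d (s + 1) = hh d s + d / 16 * rho d s := by
  have hγ : (1 + d / 32) ≠ 0 := ne_of_gt (gamma_pos hd)
  rcases le_or_gt (s + 1) 0 with h | h
  · have hs : s ≤ 0 := by omega
    rw [hh, hh, rho, min_eq_left h, min_eq_left hs, max_eq_right h, max_eq_right hs,
      zpow_add_one₀ hγ]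
    push_cast
    ring
  · have hs : 0 ≤ s := by omega
    rw [hh, hh, rho, min_eq_right (by omega : (0:ℤ) ≤ s + 1), min_eq_right hs,
      max_eq_left (by omega : (0:ℤ) ≤ s + 1), max_eq_left hs, zpow_zero]
    push_cast
    ring

lemma ber (hd : 0 < d) {k : ℤ} (hk : 0 ≤ k) : 1 + (k : ℝ) * (d / 32) ≤ (1 + d / 32) ^ k := by
  lift k to ℕ using hk
  rw [zpow_natCast]
  have := one_add_mul_le_pow (a := d / 32) (by linarith) k
  push_cast
  linarith

lemma M_ge (hd : 0 < d) (hd1 : d ≤ 1) (hM : 96 ≤ d * ((M : ℝ) - 1)) : (97:ℝ) ≤ (M:ℝ) := by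
  rcases le_or_gt 0 ((M:ℝ) - 1) with h | h
  · nlinarith
  · nlinarith

lemma gpow_M (hd : 0 < d) (hd1 : d ≤ 1) (hM : 96 ≤ d * ((M : ℝ) - 1)) :
    (4:ℝ) ≤ (1 + d / 32) ^ (M : ℤ) := by
  have h := ber hd (k := (M:ℤ)) (by positivity)
  have : (96:ℝ) ≤ d * (M:ℝ) := by nlinarith [M_ge hd hd1 hM]
  push_cast at h ⊢
  nlinarith

lemma hh_B (hd : 0 < d) (hd1 : d ≤ 1) (hM : 96 ≤ d * ((M : ℝ) - 1)) (s : ℤ) :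
    hh d (s + 1 - M) ≤ hh d s - rho d s := by
  have hγ : (0:ℝ) < 1 + d / 32 := gamma_pos hd
  have hγ1 : (1:ℝ) ≤ 1 + d / 32 := by linarith
  have hγ2 : (1 + d / 32 : ℝ) ≤ 2 := by linarith
  have hMR := M_ge hd hd1 hM
  have hMZ : (97:ℤ) ≤ (M:ℤ) := by exact_mod_cast hMR
  have h4 := gpow_M hd hd1 hM
  have hγMpos : (0:ℝ) < (1 + d / 32) ^ (M:ℤ) := zpow_pos hγ _
  rcases le_or_gt s 0 with hs | hs
  · have h1 : s + 1 - M ≤ 0 := by omega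
    rw [hh, hh, rho, min_eq_left h1, min_eq_left hs, max_eq_right h1, max_eq_right hs]
    have hsplit : (1 + d / 32) ^ (s + 1 - (M:ℤ)) =
        (1 + d / 32) ^ s * ((1 + d / 32) * ((1 + d / 32) ^ (M:ℤ))⁻¹) := by
      have e1 : s + 1 - (M:ℤ) = s + (1 - (M:ℤ)) := by ring
      rw [e1, zpow_add₀ (ne_of_gt hγ), zpow_sub₀ (ne_of_gt hγ), zpow_one]; ring
    have hspos : (0:ℝ) < (1 + d / 32) ^ s := zpow_pos hγ _
    have hinv : ((1 + d / 32) ^ (M:ℤ))⁻¹ ≤ 4⁻¹ := by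
      apply inv_anti₀ (by norm_num) h4
    have hinv0 : (0:ℝ) ≤ ((1 + d / 32) ^ (M:ℤ))⁻¹ := by positivity
    have hfrac : (1 + d / 32) * ((1 + d / 32) ^ (M:ℤ))⁻¹ ≤ 1 / 2 := by
      calc (1 + d / 32) * ((1 + d / 32) ^ (M:ℤ))⁻¹ ≤ 2 * 4⁻¹ :=
            mul_le_mul hγ2 hinv hinv0 (by norm_num)
        _ = 1 / 2 := by norm_num
    rw [hsplit]
    push_cast
    nlinarith
  · have hs1 : (1:ℤ) ≤ s := hs
    have hsR : (1:ℝ) ≤ (s:ℝ) := by exact_mod_cast hs1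
    have hmins : min s 0 = 0 := min_eq_right (by omega)
    have hmaxs : max s 0 = s := max_eq_left (by omega)
    rcases le_or_gt (s + 1 - M) 0 with h2 | h2
    · rw [hh, hh, rho, min_eq_left h2, max_eq_right h2, hmins, hmaxs, zpow_zero]
      set k : ℤ := (M:ℤ) - 1 - s with hk
      have hk0 : 0 ≤ k := by omega
      have hexp : (1 + d / 32) ^ (s + 1 - (M:ℤ)) = ((1 + d / 32) ^ k)⁻¹ := by
        rw [← zpow_neg]
        congr 1
        omega
      have hbk := ber hd hk0
      have hkpos : (0:ℝ) < (1 + d / 32) ^ k := zpow_pos hγ _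
      have hks : (k:ℝ) + (s:ℝ) = (M:ℝ) - 1 := by rw [hk]; push_cast; ring
      have hknn : (0:ℝ) ≤ (k:ℝ) := by exact_mod_cast hk0
      have hpos2 : (0:ℝ) ≤ 1 + d / 16 * (s:ℝ) := by nlinarith
      have step1 : (1 + (k:ℝ) * (d/32)) * (1 + d / 16 * (s:ℝ)) ≤
          (1 + d / 32) ^ k * (1 + d / 16 * (s:ℝ)) := mul_le_mul_of_nonneg_right hbk hpos2
      have step2 : (2:ℝ) ≤ (1 + (k:ℝ) * (d/32)) * (1 + d / 16 * (s:ℝ)) := by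
        nlinarith [mul_nonneg (mul_nonneg hknn (by linarith : (0:ℝ) ≤ d/32))
          (mul_nonneg (by linarith : (0:ℝ) ≤ d/16) (by linarith : (0:ℝ) ≤ (s:ℝ)))]
      have hkey : (2:ℝ) ≤ (1 + d / 16 * (s:ℝ)) * (1 + d / 32) ^ k := by
        rw [mul_comm]; linarith
      have hfin : 2 / (1 + d / 32) ^ k ≤ 1 + d / 16 * (s:ℝ) :=
        (div_le_iff₀ hkpos).mpr hkey
      rw [hexp]
      rw [div_eq_mul_inv] at hfin
      push_cast
      linarith
    · have h3 : 0 ≤ s + 1 - M := by omega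
      rw [hh, hh, rho, min_eq_right h3, max_eq_left h3, hmins, hmaxs, zpow_zero]
      have h6 : (6:ℝ) ≤ d / 16 * ((M:ℝ) - 1) := by linarith
      have expand : d / 16 * (((s:ℝ)) + 1 - (M:ℝ)) = d / 16 * (s:ℝ) - d / 16 * ((M:ℝ) - 1) := by
        ring
      push_cast
      rw [expand]
      linarith


lemma cars_zero : cars x 0 = 0 := by simp [cars]

lemma cars_succ (t : ℕ) : cars x (t + 1) = cars x t + (if x t then 1 else 0) := by
  by_cases h : x t = true
  · simp [cars, Finset.range_add_one, Finset.filter_insert, h]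
  · simp [cars, Finset.range_add_one, Finset.filter_insert, h]

lemma sig_zero : sig M x 0 = -(M : ℤ) := by
  simp [sig, cars_zero]

lemma sig_succ (t : ℕ) :
    sig M x (t + 1) = if x t then sig M x t + 1 - M else sig M x t + 1 := by
  rw [sig, sig, cars_succ]
  by_cases h : x t
  · simp only [h, if_true]
    push_cast
    ring
  · simp only [h, if_false]
    push_cast
    ring

/-- the potential function -/
def Phi (d : ℝ) (M : ℕ) (x : ℕ → Bool) (t : ℕ) : ℝ :=
  R0 d M x t * Sb d M x t * hh d (sig M x t)

lemma Phi_nonneg (hd : 0 < d) (hd1 : d ≤ 1) (t : ℕ) : 0 ≤ Phi d M x t := by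
  obtain ⟨h1, _, _, _, h5, _⟩ := bounds (x := x) (M := M) hd hd1 t
  have := hh_nonneg hd (sig M x t)
  rw [Phi]
  positivity

lemma Phi_step (hd : 0 < d) (hd1 : d ≤ 1) (hM : 96 ≤ d * ((M : ℝ) - 1)) (t : ℕ) :
    Phi d M x (t + 1) + 2 * (if x t then w0 d M x t else 0) ≤
      Phi d M x t + d / 8 * w0 d M x t := by
  obtain ⟨h1, _, _, _, h5, _⟩ := bounds (x := x) (M := M) hd hd1 t
  obtain ⟨h1', _, _, _, h5', _⟩ := bounds (x := x) (M := M) hd hd1 (t + 1)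
  have hSle := Sb_succ_le (x := x) (M := M) hd hd1 t
  have hR0le := R0_succ_le (x := x) (M := M) hd hd1 t
  have hρp := rho_pos hd (sig M x t)
  have hw0 := w0_pos (x := x) (M := M) hd hd1 t
  by_cases hx : x t
  · have hσ : sig M x (t + 1) = sig M x t + 1 - M := by rw [sig_succ]; simp [hx]
    have hhb := hh_B hd hd1 hM (sig M x t)
    have hhn : 0 ≤ hh d (sig M x (t + 1)) := hh_nonneg hd _
    have key : Phi d M x (t + 1) ≤ Phi d M x t - 2 * w0 d M x t := by
      rw [Phi, Phi]
      have step1 : R0 d M x (t + 1) * Sb d M x (t + 1) * hh d (sig M x (t + 1)) ≤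
          R0 d M x t * Sb d M x t * hh d (sig M x (t + 1)) := by
        apply mul_le_mul_of_nonneg_right _ hhn
        exact mul_le_mul hR0le hSle (le_of_lt h5') (le_of_lt h1)
      have step2 : R0 d M x t * Sb d M x t * hh d (sig M x (t + 1)) ≤
          R0 d M x t * Sb d M x t * (hh d (sig M x t) - rho d (sig M x t)) := by
        apply mul_le_mul_of_nonneg_left _ (by positivity)
        rw [hσ]; exact hhb
      have expand : R0 d M x t * Sb d M x t * (hh d (sig M x t) - rho d (sig M x t)) =
          R0 d M x t * Sb d M x t * hh d (sig M x t) - 2 * w0 d M x t := by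
        rw [w0]; ring
      linarith
    rw [if_pos hx]
    nlinarith
  · have hσ : sig M x (t + 1) = sig M x t + 1 := by rw [sig_succ]; simp [hx]
    have hhs := hh_succ hd (sig M x t)
    have hhn : 0 ≤ hh d (sig M x (t + 1)) := hh_nonneg hd _
    have key : Phi d M x (t + 1) ≤ Phi d M x t + d / 8 * w0 d M x t := by
      rw [Phi, Phi]
      have hR0e : R0 d M x (t + 1) = R0 d M x t := by rw [R0_succ, if_neg hx]
      rw [hR0e]
      have step1 : R0 d M x t * Sb d M x (t + 1) * hh d (sig M x (t + 1)) ≤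
          R0 d M x t * Sb d M x t * hh d (sig M x (t + 1)) := by
        apply mul_le_mul_of_nonneg_right _ hhn
        exact mul_le_mul_of_nonneg_left hSle (le_of_lt h1)
      have expand : R0 d M x t * Sb d M x t * hh d (sig M x (t + 1)) =
          R0 d M x t * Sb d M x t * hh d (sig M x t) + d / 8 * w0 d M x t := by
        rw [hσ, hhs, w0]; ring
      linarith
    rw [if_neg hx]
    linarith

lemma Phi_tele (hd : 0 < d) (hd1 : d ≤ 1) (hM : 96 ≤ d * ((M : ℝ) - 1)) (T : ℕ) :
    Phi d M x T + 2 * ∑ t ∈ Finset.range T, (if x t then w0 d M x t else 0) ≤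
      Phi d M x 0 + d / 8 * ∑ t ∈ Finset.range T, w0 d M x t := by
  induction T with
  | zero => simp
  | succ T ih =>
      have := Phi_step (x := x) hd hd1 hM T
      rw [Finset.sum_range_succ, Finset.sum_range_succ]
      linarith

lemma Phi_zero_le (hd : 0 < d) (hd1 : d ≤ 1) (hM : 96 ≤ d * ((M : ℝ) - 1)) :
    Phi d M x 0 ≤ d / 8 := by
  have h4 := gpow_M hd hd1 hM
  have hγMpos : (0:ℝ) < (1 + d / 32) ^ (M:ℤ) := zpow_pos (gamma_pos hd) _
  have hhM : hh d (-(M:ℤ)) = 2 * ((1 + d / 32) ^ (M:ℤ))⁻¹ := by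
    rw [hh, min_eq_left (by omega : -(M:ℤ) ≤ 0), max_eq_right (by omega : -(M:ℤ) ≤ 0),
      zpow_neg]
    push_cast
    ring
  have hinv : ((1 + d / 32) ^ (M:ℤ))⁻¹ ≤ 4⁻¹ := inv_anti₀ (by norm_num) h4
  rw [Phi, sig_zero, R0_zero, Sb_zero, hhM]
  nlinarith

/-- the error budget on side 0 never drops below `d/8`. -/
lemma R0_ge (hd : 0 < d) (hd1 : d ≤ 1) (hM : 96 ≤ d * ((M : ℝ) - 1)) (T : ℕ) :
    d / 8 ≤ R0 d M x T := by
  have htele := Phi_tele (x := x) hd hd1 hM T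
  have hPhi := Phi_nonneg (x := x) (M := M) hd hd1 T
  have hPhi0 := Phi_zero_le (x := x) (M := M) hd hd1 hM
  have he0 := sum_e0_eq (x := x) (d := d) (M := M) T
  have hw : ∑ t ∈ Finset.range T, w0 d M x t ≤ 1 := by
    have h1 : ∑ t ∈ Finset.range T, w0 d M x t ≤
        ∑ t ∈ Finset.range T, (w0 d M x t + w1 d M x t) := by
      apply Finset.sum_le_sum
      intro i _
      have := w1_pos (x := x) (M := M) hd hd1 i
      linarith
    have h2 := sum_w_eq (x := x) (d := d) (M := M) T
    obtain ⟨_, _, _, _, h5, _⟩ := bounds (x := x) (M := M) hd hd1 T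
    linarith
  have hd8 : 0 ≤ d / 8 := by linarith
  nlinarith

lemma not_not_fun : (fun i => !(!x i)) = x := by
  funext i; simp

/-- swapping the roles of the two sides -/
lemma state_not (t : ℕ) :
    state d M (fun i => !x i) t = (R1 d M x t, R0 d M x t, Sb d M x t) := by
  induction t with
  | zero => rfl
  | succ t ih =>
      have h0 : R0 d M (fun i => !x i) t = R1 d M x t := by rw [R0, ih]
      have h1 : R1 d M (fun i => !x i) t = R0 d M x t := by rw [R1, ih]
      have h2 : Sb d M (fun i => !x i) t = Sb d M x t := by rw [Sb, ih]
      have hsig : sig M (fun i => !(!x i)) t = sig M x t := by rw [not_not_fun]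
      have hw0 : w0 d M (fun i => !x i) t = w1 d M x t := by
        rw [w0, w1, h0, h2]
      have hw1 : w1 d M (fun i => !x i) t = w0 d M x t := by
        rw [w1, w0, h1, h2, hsig]
      have e0 := R0_succ (d := d) (M := M) (x := fun i => !x i) t
      have e1 := R1_succ (d := d) (M := M) (x := fun i => !x i) t
      have e2 := Sb_succ (d := d) (M := M) (x := fun i => !x i) t
      have f0 := R0_succ (d := d) (M := M) (x := x) t
      have f1 := R1_succ (d := d) (M := M) (x := x) t
      have f2 := Sb_succ (d := d) (M := M) (x := x) t
      have : state d M (fun i => !x i) (t + 1) =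
          (R0 d M (fun i => !x i) (t + 1), R1 d M (fun i => !x i) (t + 1),
            Sb d M (fun i => !x i) (t + 1)) := rfl
      rw [this, e0, e1, e2, h0, h1, h2, hw0, hw1, f0, f1, f2]
      by_cases hx : x t <;> simp [hx] <;> ring

lemma R1_eq_R0_not (t : ℕ) : R1 d M x t = R0 d M (fun i => !x i) t := by
  rw [R0, state_not]

lemma Sb_eq_Sb_not (t : ℕ) : Sb d M x t = Sb d M (fun i => !x i) t := by
  rw [Sb, Sb, state_not]; rfl

lemma w0_not (t : ℕ) : w0 d M (fun i => !x i) t = w1 d M x t := by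
  rw [w0, w1, R0, Sb, state_not]

lemma w1_not (t : ℕ) : w1 d M (fun i => !x i) t = w0 d M x t := by
  rw [w1, w0, not_not_fun, R1, Sb, state_not]

lemma R1_ge (hd : 0 < d) (hd1 : d ≤ 1) (hM : 96 ≤ d * ((M : ℝ) - 1)) (T : ℕ) :
    d / 8 ≤ R1 d M x T := by
  rw [R1_eq_R0_not]
  exact R0_ge hd hd1 hM T

/-- adaptedness: everything at time `t` depends only on bits before `t`. -/
lemma cars_congr (t : ℕ) (h : ∀ j, j < t → x j = x' j) : cars x t = cars x' t := by
  unfold cars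
  congr 1
  apply Finset.filter_congr
  intro i hi
  rw [h i (Finset.mem_range.mp hi)]

lemma sig_congr (t : ℕ) (h : ∀ j, j < t → x j = x' j) : sig M x t = sig M x' t := by
  rw [sig, sig, cars_congr t h]

lemma state_congr (t : ℕ) (h : ∀ j, j < t → x j = x' j) :
    state d M x t = state d M x' t := by
  induction t with
  | zero => rfl
  | succ t ih =>
      have hlt : ∀ j, j < t → x j = x' j := fun j hj => h j (by omega)
      have hst := ih hlt
      have hxt : x t = x' t := h t (by omega)
      have hs0 : sig M x t = sig M x' t := sig_congr t hlt
      have hs1 : sig M (fun i => !x i) t = sig M (fun i => !x' i) t :=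
        sig_congr t (fun j hj => by simp only [hlt j hj])
      show state d M x (t + 1) = state d M x' (t + 1)
      simp only [state, hst, hxt, hs0, hs1]

lemma w0_congr (i : ℕ) (h : ∀ j, j < i → x j = x' j) : w0 d M x i = w0 d M x' i := by
  rw [w0, w0, sig_congr i h, R0, R0, Sb, Sb, state_congr i h]

lemma w1_congr (i : ℕ) (h : ∀ j, j < i → x j = x' j) : w1 d M x i = w1 d M x' i := by
  rw [w1, w1, sig_congr (x := fun i => !x i) (x' := fun i => !x' i) i
    (fun j hj => by simp only [h j hj]), R1, R1, Sb, Sb, state_congr i h]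

/-- at a good time (nonnegative slack) the spend budget drops geometrically. -/
lemma Sb_drop (hd : 0 < d) (hd1 : d ≤ 1) (hM : 96 ≤ d * ((M : ℝ) - 1)) {t : ℕ}
    (hσ : 0 ≤ sig M x t) : Sb d M x (t + 1) ≤ (1 - d / 16) * Sb d M x t := by
  have hρ : rho d (sig M x t) = 1 := by rw [rho, min_eq_right hσ, zpow_zero]
  have hR0 := R0_ge (x := x) hd hd1 hM t
  obtain ⟨_, _, _, _, h5, _⟩ := bounds (x := x) (M := M) hd hd1 t
  have hw1 := w1_pos (x := x) (M := M) hd hd1 t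
  have hw0 : d / 16 * Sb d M x t ≤ w0 d M x t := by
    rw [w0, hρ]
    nlinarith
  rw [Sb_succ]
  nlinarith

/-- weak sparsity gives arbitrarily late good times. -/
lemma freq_good (hd : 0 < d) (hd1 : d ≤ 1) (hM : 96 ≤ d * ((M : ℝ) - 1))
    (hws : weaklySparse x) (T : ℕ) : ∃ t, T ≤ t ∧ 0 ≤ sig M x t := by
  have hMR := M_ge (M := M) hd hd1 hM
  have hM0 : (0:ℝ) < (M:ℝ) := by linarith
  have hcob : Filter.IsCoboundedUnder (· ≥ ·) Filter.atTop
      (fun t : ℕ => (cars x t : ℝ) / t) := by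
    apply Filter.isCoboundedUnder_ge_of_le (x := 1) Filter.atTop
    intro t
    rcases Nat.eq_zero_or_pos t with h | h
    · subst h; simp
    · have h1 : (cars x t : ℝ) ≤ (t : ℝ) := by
        have := Finset.card_filter_le (Finset.range t) (fun i => x i = true)
        rw [Finset.card_range] at this
        exact_mod_cast this
      have h2 : (0:ℝ) < (t:ℝ) := by exact_mod_cast h
      rw [div_le_one h2]
      exact h1
  have hlt : Filter.liminf (fun t : ℕ => (cars x t : ℝ) / t) Filter.atTop <
      1 / (2 * M) := by
    rw [hws]
    positivity
  have hfr := Filter.frequently_lt_of_liminf_lt hcob hlt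
  rw [Filter.frequently_atTop] at hfr
  obtain ⟨t, ht1, ht2⟩ := hfr (max T (2 * M + 1))
  refine ⟨t, le_trans (le_max_left _ _) ht1, ?_⟩
  have h2M : 2 * M + 1 ≤ t := le_trans (le_max_right _ _) ht1
  have htpos : (0:ℝ) < (t:ℝ) := by
    have : 1 ≤ t := by omega
    exact_mod_cast Nat.lt_of_lt_of_le Nat.zero_lt_one this
  have h2MR : 2 * (M:ℝ) + 1 ≤ (t:ℝ) := by exact_mod_cast h2M
  have hcars : (cars x t : ℝ) * (2 * M) < t := by
    rw [div_lt_div_iff₀ htpos (by positivity)] at ht2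
    linarith
  have hfin : (M:ℝ) * ((cars x t : ℝ) + 1) ≤ (t:ℝ) := by nlinarith
  rw [sig, sub_nonneg]
  exact_mod_cast hfin

/-- if there are arbitrarily late good times, the spend budget tends to zero. -/
lemma Sb_to_zero (hd : 0 < d) (hd1 : d ≤ 1) (hM : 96 ≤ d * ((M : ℝ) - 1))
    (hfreq : ∀ T, ∃ t, T ≤ t ∧ 0 ≤ sig M x t) {ε : ℝ} (hε : 0 < ε) :
    ∃ T, Sb d M x T ≤ ε := by
  have hq0 : (0:ℝ) ≤ 1 - d / 16 := by linarith
  have hq1 : 1 - d / 16 < 1 := by linarith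
  have key : ∀ k : ℕ, ∃ T, Sb d M x T ≤ (1 - d / 16) ^ k := by
    intro k
    induction k with
    | zero => exact ⟨0, by rw [Sb_zero, pow_zero]⟩
    | succ k ih =>
        obtain ⟨T, hT⟩ := ih
        obtain ⟨t, hTt, hgood⟩ := hfreq T
        refine ⟨t + 1, ?_⟩
        have h1 := Sb_drop (x := x) hd hd1 hM hgood
        have h2 := Sb_mono (x := x) (M := M) hd hd1 hTt
        calc Sb d M x (t + 1) ≤ (1 - d / 16) * Sb d M x t := h1
          _ ≤ (1 - d / 16) * (1 - d / 16) ^ k := by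
              apply mul_le_mul_of_nonneg_left _ hq0
              linarith
          _ = (1 - d / 16) ^ (k + 1) := by ring
  obtain ⟨n, hn⟩ := exists_pow_lt_of_lt_one hε hq1
  obtain ⟨T, hT⟩ := key n
  exact ⟨T, le_trans hT (le_of_lt hn)⟩

/-- the success probability lower bound. -/
lemma succ_main (hd : 0 < d) (hd1 : d ≤ 1) (hM : 96 ≤ d * ((M : ℝ) - 1))
    (hzero : ∀ ε : ℝ, 0 < ε → ∃ T, Sb d M x T ≤ ε) :
    1 - d / 2 ≤ ∑' t, (if x t then w1 d M x t else w0 d M x t) := by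
  set g : ℕ → ℝ := fun t => if x t then w1 d M x t else w0 d M x t with hg
  have hgnn : ∀ t, 0 ≤ g t := by
    intro t
    have := w0_pos (x := x) (M := M) hd hd1 t
    have := w1_pos (x := x) (M := M) hd hd1 t
    rw [hg]
    dsimp only
    split <;> linarith
  have hparts : ∀ T : ℕ, ∑ t ∈ Finset.range T, g t =
      (1 - Sb d M x T) - (d / 4 - R0 d M x T) - (d / 4 - R1 d M x T) := by
    intro T
    have hpt : ∀ t, g t = (w0 d M x t + w1 d M x t) - (if x t then w0 d M x t else 0)
        - (if x t then 0 else w1 d M x t) := by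
      intro t
      rw [hg]
      dsimp only
      by_cases hx : x t <;> simp [hx]
    calc ∑ t ∈ Finset.range T, g t
        = ∑ t ∈ Finset.range T, ((w0 d M x t + w1 d M x t)
            - (if x t then w0 d M x t else 0) - (if x t then 0 else w1 d M x t)) :=
          Finset.sum_congr rfl (fun t _ => hpt t)
      _ = (∑ t ∈ Finset.range T, (w0 d M x t + w1 d M x t))
            - (∑ t ∈ Finset.range T, (if x t then w0 d M x t else 0))
            - (∑ t ∈ Finset.range T, (if x t then 0 else w1 d M x t)) := by
          rw [Finset.sum_sub_distrib, Finset.sum_sub_distrib]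
      _ = _ := by rw [sum_w_eq, sum_e0_eq, sum_e1_eq]
  have hgle : ∀ T, ∑ t ∈ Finset.range T, g t ≤ 1 := by
    intro T
    obtain ⟨h1, h2, h3, h4, h5, h6⟩ := bounds (x := x) (M := M) hd hd1 T
    rw [hparts T]
    linarith
  have hsummable : Summable g := summable_of_sum_range_le hgnn hgle
  by_contra hcon
  push_neg at hcon
  have hεpos : 0 < ((1 - d / 2) - ∑' t, g t) / 2 := by linarith
  obtain ⟨T, hT⟩ := hzero _ hεpos
  have h1 : ∑ t ∈ Finset.range T, g t ≤ ∑' t, g t :=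
    Summable.sum_le_tsum (Finset.range T) (fun i _ => hgnn i) hsummable
  obtain ⟨hb1, _, hb3, _, _, _⟩ := bounds (x := x) (M := M) hd hd1 T
  have h2 := hparts T
  linarith

/-- the safety bound: total mass on incorrect predictions is at most `d/2`. -/
lemma safety_sum (hd : 0 < d) (hd1 : d ≤ 1) :
    ∑' t, (if x t then w0 d M x t else w1 d M x t) ≤ d / 2 := by
  apply Real.tsum_le_of_sum_range_le
  · intro t
    have := w0_pos (x := x) (M := M) hd hd1 t
    have := w1_pos (x := x) (M := M) hd hd1 t
    split <;> linarith
  · intro T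
    have hpt : ∀ t, (if x t then w0 d M x t else w1 d M x t) =
        (if x t then w0 d M x t else 0) + (if x t then 0 else w1 d M x t) := by
      intro t
      by_cases hx : x t <;> simp [hx]
    obtain ⟨hb1, _, hb3, _, _, _⟩ := bounds (x := x) (M := M) hd hd1 T
    calc ∑ t ∈ Finset.range T, (if x t then w0 d M x t else w1 d M x t)
        = (∑ t ∈ Finset.range T, (if x t then w0 d M x t else 0)) +
          (∑ t ∈ Finset.range T, (if x t then 0 else w1 d M x t)) := by
          rw [← Finset.sum_add_distrib]
          exact Finset.sum_congr rfl (fun t _ => hpt t)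
      _ = (d / 4 - R0 d M x T) + (d / 4 - R1 d M x T) := by rw [sum_e0_eq, sum_e1_eq]
      _ ≤ d / 2 := by linarith

/-- the mass assigned to prediction `(i, z)`. -/
def G (d : ℝ) (M : ℕ) (x : ℕ → Bool) : ℕ × Bool → ℝ :=
  fun p => if p.2 then w1 d M x p.1 else w0 d M x p.1

lemma G_nonneg (hd : 0 < d) (hd1 : d ≤ 1) (p : ℕ × Bool) : 0 ≤ G d M x p := by
  have := w0_pos (x := x) (M := M) hd hd1 p.1
  have := w1_pos (x := x) (M := M) hd hd1 p.1
  rw [G]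
  split <;> linarith

lemma G_sum_le (hd : 0 < d) (hd1 : d ≤ 1) (u : Finset (ℕ × Bool)) :
    ∑ p ∈ u, G d M x p ≤ 1 := by
  set T := (u.sup fun p => p.1) + 1 with hT
  have hsub : u ⊆ Finset.range T ×ˢ (Finset.univ : Finset Bool) := by
    intro p hp
    rw [Finset.mem_product, Finset.mem_range]
    exact ⟨Nat.lt_succ_of_le (Finset.le_sup (f := fun p => p.1) hp), Finset.mem_univ _⟩
  have h1 : ∑ p ∈ u, G d M x p ≤ ∑ p ∈ Finset.range T ×ˢ (Finset.univ : Finset Bool),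
      G d M x p :=
    Finset.sum_le_sum_of_subset_of_nonneg hsub (fun p _ _ => G_nonneg hd hd1 p)
  have h2 : ∑ p ∈ Finset.range T ×ˢ (Finset.univ : Finset Bool), G d M x p =
      ∑ t ∈ Finset.range T, (w0 d M x t + w1 d M x t) := by
    rw [Finset.sum_product]
    apply Finset.sum_congr rfl
    intro i _
    rw [Fintype.sum_bool]
    simp only [G]
    norm_num
    ring
  obtain ⟨_, _, _, _, h5, _⟩ := bounds (x := x) (M := M) hd hd1 T
  rw [h2, sum_w_eq] at h1
  linarith

lemma G_summable (hd : 0 < d) (hd1 : d ≤ 1) : Summable (G d M x) :=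
  summable_of_sum_le (fun p => G_nonneg hd hd1 p) (G_sum_le hd hd1)

lemma G_tsum_le (hd : 0 < d) (hd1 : d ≤ 1) : ∑' p, G d M x p ≤ 1 :=
  Summable.tsum_le_of_sum_le (G_summable hd hd1) (G_sum_le hd hd1)

end
end BPaux

open BPaux in
/-- Lemma 4.2: for every `δ > 0` there is a bit-prediction strategy `P` with
`Succ^bp(P, A_{ws} ∪ A_{co-ws}) > 1 - δ`, which moreover on *every* sequence `x`
outputs an incorrect prediction with probability at most `δ`. -/
theorem bit_prediction_ws_cows (δ : ℝ) (hδ : 0 < δ) :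
    ∃ P : BitPredStrategy,
      (∃ c : ℝ, 1 - δ < c ∧
        ∀ x : ℕ → Bool, (weaklySparse x ∨ weaklySparse (fun i => !x i)) →
          c ≤ succBP P x) ∧
      (∀ x : ℕ → Bool, ∑' i : ℕ, P.prob x (some (i, !x i)) ≤ δ) := by
  classical
  set d : ℝ := min δ 1 with hdd
  have hd : 0 < d := lt_min hδ one_pos
  have hd1 : d ≤ 1 := min_le_right δ 1
  have hdδ : d ≤ δ := min_le_left δ 1
  set M : ℕ := ⌈(96:ℝ) / d⌉₊ + 1 with hMdef
  have hM : 96 ≤ d * ((M:ℝ) - 1) := by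
    have h1 : (96:ℝ) / d ≤ (⌈(96:ℝ) / d⌉₊ : ℝ) := Nat.le_ceil _
    have h2 : ((M:ℝ) - 1) = (⌈(96:ℝ) / d⌉₊ : ℝ) := by rw [hMdef]; push_cast; ring
    rw [h2]
    calc (96:ℝ) = d * (96 / d) := by field_simp
      _ ≤ d * _ := mul_le_mul_of_nonneg_left h1 (le_of_lt hd)
  refine ⟨⟨fun y o => match o with
      | none => 1 - ∑' p : ℕ × Bool, G d M y p
      | some (i, z) => G d M y (i, z), ?_, ?_, ?_⟩, ⟨1 - d / 2, by linarith, ?_⟩, ?_⟩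
  · -- nonneg
    intro y o
    rcases o with _ | ⟨i, z⟩
    · show (0:ℝ) ≤ 1 - ∑' p : ℕ × Bool, G d M y p
      have := G_tsum_le (x := y) (M := M) hd hd1
      linarith
    · show (0:ℝ) ≤ G d M y (i, z)
      exact G_nonneg hd hd1 _
  · -- total
    intro y
    have hsummable := G_summable (x := y) (M := M) hd hd1
    set A : ℝ := ∑' p : ℕ × Bool, G d M y p with hA
    set f2 : Option (ℕ × Bool) → ℝ := fun o => o.elim 0 (G d M y) with hf2
    have hvan : ∀ o ∉ Set.range (some : ℕ × Bool → Option (ℕ × Bool)), f2 o = 0 := by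
      intro o ho
      rcases o with _ | p
      · rfl
      · exact absurd ⟨p, rfl⟩ ho
    have h2 : HasSum f2 A := by
      refine ((Option.some_injective _).hasSum_iff hvan).mp ?_
      exact hsummable.hasSum
    have h1 : HasSum (fun o : Option (ℕ × Bool) => if o = none then 1 - A else 0) (1 - A) :=
      hasSum_ite_eq none _
    have h3 : HasSum (fun o : Option (ℕ × Bool) => (match o with
        | none => 1 - A
        | some (i, z) => G d M y (i, z) : ℝ)) ((1 - A) + A) := by
      have hadd := h1.add h2
      convert hadd using 1
      funext o
      rcases o with _ | ⟨i, z⟩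
      · simp [hf2]
      · simp [hf2, G]
    have := h3.tsum_eq
    rw [this]
    ring
  · -- adapted
    intro y y' i z h
    show G d M y (i, z) = G d M y' (i, z)
    rw [G, G]
    rcases z with _ | _
    · exact w0_congr i h
    · exact w1_congr i h
  · -- success
    intro x hx
    have key : 1 - d / 2 ≤ ∑' t, (if x t then w1 d M x t else w0 d M x t) := by
      rcases hx with hws | hws
      · exact succ_main hd hd1 hM
          (fun ε hε => Sb_to_zero hd hd1 hM (freq_good hd hd1 hM hws) hε)
      · have key := succ_main (x := fun i => !x i) hd hd1 hM
          (fun ε hε => Sb_to_zero hd hd1 hM (freq_good hd hd1 hM hws) hε)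
        have heq : (fun t => if (fun i => !x i) t then w1 d M (fun i => !x i) t
            else w0 d M (fun i => !x i) t) =
            (fun t => if x t then w1 d M x t else w0 d M x t) := by
          funext t
          rw [w0_not, w1_not]
          by_cases hxt : x t <;> simp [hxt]
        rw [heq] at key
        exact key
    refine le_trans key (le_of_eq ?_)
    rw [succBP]
    refine tsum_congr fun i => ?_
    show (if x i then w1 d M x i else w0 d M x i) = G d M x (i, x i)
    rw [G]
  · -- safety
    intro x
    have hcalc : ∑' i : ℕ, G d M x (i, !x i) =
        ∑' t, (if x t then w0 d M x t else w1 d M x t) := by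
      refine tsum_congr fun i => ?_
      rw [G]
      by_cases hxt : x i <;> simp [hxt]
    have hle : ∑' i : ℕ, G d M x (i, !x i) ≤ δ := by
      rw [hcalc]
      have := safety_sum (x := x) (M := M) hd hd1
      linarith
    exact hle
end

section
/- Let M = (Q, s, Δ) be a finite automaton over the binary alphabet and suppose B ⊆ Q is strongly accessible. If x ∈ {0,1}^ω is such that V_B(x) is weakly sparse, then there exists a state q ∈ Q_inf(x) such that x^{(q)} is weakly sparse or co-weakly sparse. -/
/-- The subsequence `x^{(q)}` of `x` recording, for each visit of the automaton to state
`q`, the bit read immediately after that visit: if `V_q(x) = {t(1) < t(2) < ⋯}` then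
`x^{(q)}_i = x_{t(i)+1}` (in 0-indexed form, `x^{(q)} i = x (t(i+1))`, using `Nat.nth` to
enumerate `V_q(x)`). -/
noncomputable def subseqAt {Q : Type*} (Δ : Q → Bool → Q) (s : Q) (x : ℕ → Bool)
    (q : Q) : ℕ → Bool :=
  fun i => x (Nat.nth (fun t => autoRun Δ s x t = q) i)


open Filter Finset

section WSaux

/-- visits count -/
def wsCnt {Q : Type} [DecidableEq Q] (Δ : Q → Bool → Q) (s : Q) (x : ℕ → Bool) (q : Q) (t : ℕ) : ℕ :=
  ((Finset.range t).filter (fun i => autoRun Δ s x i = q)).card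

/-- visits with given next bit -/
def wsCntb {Q : Type} [DecidableEq Q] (Δ : Q → Bool → Q) (s : Q) (x : ℕ → Bool) (q : Q) (b : Bool) (t : ℕ) : ℕ :=
  ((Finset.range t).filter (fun i => autoRun Δ s x i = q ∧ x i = b)).card

lemma cars_add_not (y : ℕ → Bool) (m : ℕ) :
    cars y m + cars (fun i => !y i) m = m := by
  classical
  have h : ((Finset.range m).filter (fun i => (!y i) = true)) =
      ((Finset.range m).filter (fun i => ¬(y i = true))) := by
    apply Finset.filter_congr; intro i _; simp
  show _ + ((Finset.range m).filter (fun i => (!y i) = true)).card = m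
  rw [cars, h, Finset.card_filter_add_card_filter_not, Finset.card_range]

lemma cars_le (y : ℕ → Bool) (m : ℕ) : cars y m ≤ m := by
  have := Finset.card_filter_le (Finset.range m) (fun i => y i = true)
  simpa [cars] using this

lemma count_nth_filter (p : ℕ → Prop) [DecidablePred p] (hp : (setOf p).Infinite)
    (x : ℕ → Bool) (t : ℕ) :
    ((Finset.range (Nat.count p t)).filter (fun i => x (Nat.nth p i) = true)).card
      = ((Finset.range t).filter (fun s => p s ∧ x s = true)).card := by
  have hcn : ∀ i : ℕ, Nat.count p (Nat.nth p i) = i := fun i =>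
    Nat.count_nth (fun hf => absurd hf hp)
  have hmono : ∀ {a b : ℕ}, a < b → p a → Nat.count p a < Nat.count p b := by
    intro a b hab hpa
    have h1 : Nat.count p (a + 1) = Nat.count p a + 1 := by
      rw [Nat.count_succ, if_pos hpa]
    have h2 : Nat.count p (a + 1) ≤ Nat.count p b := Nat.count_monotone p hab
    omega
  have hnth_lt : ∀ {i : ℕ}, i < Nat.count p t → Nat.nth p i < t := by
    intro i h
    by_contra hle
    push_neg at hle
    have := Nat.count_monotone p hle
    rw [hcn i] at this
    omega
  apply Finset.card_bij (fun a _ => Nat.nth p a)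
  · intro a ha
    simp only [Finset.mem_filter, Finset.mem_range] at ha ⊢
    exact ⟨hnth_lt ha.1, Nat.nth_mem_of_infinite hp a, ha.2⟩
  · intro a _ b _ h
    exact Nat.nth_injective hp h
  · intro b hb
    simp only [Finset.mem_filter, Finset.mem_range] at hb
    refine ⟨Nat.count p b, ?_, Nat.nth_count hb.2.1⟩
    simp only [Finset.mem_filter, Finset.mem_range]
    exact ⟨hmono hb.1 hb.2.1, by rw [Nat.nth_count hb.2.1]; exact hb.2.2⟩

variable {Q : Type} [DecidableEq Q] (Δ : Q → Bool → Q) (s : Q) (x : ℕ → Bool)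

lemma wsCnt_eq_count (q : Q) (t : ℕ) :
    wsCnt Δ s x q t = Nat.count (fun i => autoRun Δ s x i = q) t :=
  (Nat.count_eq_card_filter_range _ _).symm

lemma cars_subseq (q : Q) (hq : {t | autoRun Δ s x t = q}.Infinite) (t : ℕ) :
    cars (subseqAt Δ s x q) (wsCnt Δ s x q t) = wsCntb Δ s x q true t := by
  rw [wsCnt_eq_count]
  exact count_nth_filter (fun i => autoRun Δ s x i = q) hq x t

lemma wsCntb_add (q : Q) (t : ℕ) :
    wsCntb Δ s x q true t + wsCntb Δ s x q false t = wsCnt Δ s x q t := by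
  classical
  unfold wsCntb wsCnt
  have h1 : ((Finset.range t).filter (fun i => autoRun Δ s x i = q ∧ x i = true))
      = ((Finset.range t).filter (fun i => autoRun Δ s x i = q)).filter (fun i => x i = true) := by
    rw [Finset.filter_filter]
  have h2 : ((Finset.range t).filter (fun i => autoRun Δ s x i = q ∧ x i = false))
      = ((Finset.range t).filter (fun i => autoRun Δ s x i = q)).filter (fun i => ¬(x i = true)) := by
    rw [Finset.filter_filter]
    apply Finset.filter_congr
    intro i _
    simp
  rw [h1, h2, Finset.card_filter_add_card_filter_not]

lemma wsCnt_step (q : Q) (b : Bool) (t : ℕ) :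
    wsCntb Δ s x q b t ≤ wsCnt Δ s x (Δ q b) (t + 1) := by
  apply Finset.card_le_card_of_injOn (fun a => a + 1)
  · intro a ha
    simp only [Finset.coe_filter, Set.mem_setOf_eq, Finset.mem_coe, Finset.mem_filter, Finset.mem_range] at ha ⊢
    refine ⟨by omega, ?_⟩
    show autoRun Δ s x (a + 1) = Δ q b
    rw [autoRun, ha.2.1, ha.2.2]
  · intro a _ a' _ h
    simpa using h

lemma wsCnt_chain (δ C : ℝ) (hδ0 : 0 < δ) (hδ1 : δ ≤ 1) (hC : 0 ≤ C)
    (H : ∀ (q : Q) (b : Bool) (t : ℕ), δ * wsCnt Δ s x q t - C ≤ wsCntb Δ s x q b t) :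
    ∀ (l : List Bool) (q : Q) (t : ℕ),
      δ ^ l.length * wsCnt Δ s x q t - l.length * C ≤ wsCnt Δ s x (l.foldl Δ q) (t + l.length) := by
  intro l
  induction l with
  | nil => intro q t; simp
  | cons b l ih =>
    intro q t
    have h1 := H q b t
    have h2 : (wsCntb Δ s x q b t : ℝ) ≤ wsCnt Δ s x (Δ q b) (t + 1) := by
      exact_mod_cast wsCnt_step Δ s x q b t
    have h3 := ih (Δ q b) (t + 1)
    have hfold : (b :: l).foldl Δ q = l.foldl Δ (Δ q b) := rfl
    have hlen : t + (b :: l).length = (t + 1) + l.length := by simp [List.length_cons]; omega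
    rw [hfold, hlen]
    have hpow0 : (0:ℝ) ≤ δ ^ l.length := le_of_lt (pow_pos hδ0 _)
    have hpow1 : δ ^ l.length ≤ 1 := pow_le_one₀ (le_of_lt hδ0) hδ1
    have hcnt0 : (0:ℝ) ≤ wsCnt Δ s x (Δ q b) (t + 1) := Nat.cast_nonneg _
    have step1 : δ ^ l.length * (δ * wsCnt Δ s x q t - C) - l.length * C
        ≤ δ ^ l.length * (wsCnt Δ s x (Δ q b) (t + 1) : ℝ) - l.length * C := by
      nlinarith
    have : δ ^ (b :: l).length * wsCnt Δ s x q t - (b :: l).length * C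
        ≤ δ ^ l.length * (δ * wsCnt Δ s x q t - C) - l.length * C := by
      simp only [List.length_cons]
      push_cast
      ring_nf
      nlinarith
    linarith

lemma wsCnt_reach : ∀ t : ℕ, ∃ l : List Bool, l.foldl Δ s = autoRun Δ s x t := by
  intro t
  induction t with
  | zero => exact ⟨[], rfl⟩
  | succ n ih =>
    obtain ⟨l, hl⟩ := ih
    exact ⟨l ++ [x n], by rw [List.foldl_append, hl]; rfl⟩

end WSaux

lemma wsPigeon {Q : Type} [Fintype Q] [DecidableEq Q] [Nonempty Q]
    (Δ : Q → Bool → Q) (s : Q) (x : ℕ → Bool) (t : ℕ) :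
    ∃ q : Q, (t : ℝ) / Fintype.card Q ≤ wsCnt Δ s x q t := by
  have hsum : ∑ q : Q, wsCnt Δ s x q t = t := by
    have h := Finset.card_eq_sum_card_fiberwise (s := Finset.range t)
      (t := (Finset.univ : Finset Q)) (f := fun i => autoRun Δ s x i)
      (fun a _ => Finset.mem_univ _)
    rw [Finset.card_range] at h
    simpa [wsCnt] using h.symm
  have hk : (0:ℝ) < Fintype.card Q := by
    exact_mod_cast Fintype.card_pos
  have hsum' : ∑ q : Q, (wsCnt Δ s x q t : ℝ) = (t : ℝ) := by
    exact_mod_cast congrArg (Nat.cast : ℕ → ℝ) hsum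
  obtain ⟨q, -, hq⟩ := Finset.exists_le_of_sum_le (f := fun _ : Q => (t : ℝ) / Fintype.card Q)
    (g := fun q : Q => (wsCnt Δ s x q t : ℝ)) Finset.univ_nonempty (by
      rw [Finset.sum_const, hsum', Finset.card_univ, nsmul_eq_mul,
        mul_div_cancel₀ _ (ne_of_gt hk)])
  exact ⟨q, hq⟩

lemma carsdiv_nonneg (y : ℕ → Bool) (t : ℕ) : (0:ℝ) ≤ (cars y t : ℝ) / t :=
  div_nonneg (Nat.cast_nonneg _) (Nat.cast_nonneg _)

lemma carsdiv_le_one (y : ℕ → Bool) (t : ℕ) : (cars y t : ℝ) / t ≤ 1 := by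
  rcases Nat.eq_zero_or_pos t with h | h
  · simp [h]
  · rw [div_le_one (by exact_mod_cast h)]
    exact_mod_cast cars_le y t

lemma not_weaklySparse (y : ℕ → Bool) (h : ¬ weaklySparse y) :
    ∃ δ : ℝ, 0 < δ ∧ ∀ᶠ m in Filter.atTop, δ * m ≤ (cars y m : ℝ) := by
  set u := fun t : ℕ => (cars y t : ℝ) / t with hu
  have hb : Filter.IsBoundedUnder (· ≤ ·) Filter.atTop u :=
    Filter.isBoundedUnder_of ⟨1, fun t => carsdiv_le_one y t⟩
  have hb' : Filter.IsBoundedUnder (· ≥ ·) Filter.atTop u :=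
    Filter.isBoundedUnder_of ⟨0, fun t => carsdiv_nonneg y t⟩
  have hcb : Filter.IsCoboundedUnder (· ≥ ·) Filter.atTop u := hb.isCoboundedUnder_ge
  have h0 : 0 ≤ Filter.liminf u Filter.atTop :=
    Filter.le_liminf_of_le hcb (Filter.Eventually.of_forall (fun t => carsdiv_nonneg y t))
  have hne : Filter.liminf u Filter.atTop ≠ 0 := h
  have hpos : 0 < Filter.liminf u Filter.atTop := lt_of_le_of_ne h0 (Ne.symm hne)
  refine ⟨Filter.liminf u Filter.atTop / 2, by positivity, ?_⟩
  have hev := Filter.eventually_lt_of_lt_liminf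
    (show Filter.liminf u Filter.atTop / 2 < Filter.liminf u Filter.atTop by linarith) hb'
  filter_upwards [hev] with t ht
  rcases Nat.eq_zero_or_pos t with h' | h'
  · simp [h']
  · have ht0 : (0:ℝ) < t := by exact_mod_cast h'
    have ht' : Filter.liminf u Filter.atTop / 2 < (cars y t : ℝ) / t := ht
    have h2 := (lt_div_iff₀ ht0).mp ht'
    linarith

/-- Lemma 4.3: if `B` is strongly accessible and `V_B(x)` is weakly sparse, then there is
a state `q` visited infinitely often on `x` such that `x^{(q)}` is weakly sparse or
co-weakly sparse. -/
theorem exists_sparse_subsequence {Q : Type} [Fintype Q] [DecidableEq Q]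
    (s : Q) (Δ : Q → Bool → Q) (B : Finset Q)
    (hsa : ∀ q : Q, (∃ l : List Bool, l.foldl Δ s = q) →
      ∃ l : List Bool, l.foldl Δ q ∈ B)
    (x : ℕ → Bool)
    (hx : weaklySparse (fun t => decide (autoRun Δ s x t ∈ B))) :
    ∃ q : Q, {t : ℕ | autoRun Δ s x t = q}.Infinite ∧
      (weaklySparse (subseqAt Δ s x q) ∨ weaklySparse (fun i => !subseqAt Δ s x q i)) := by
  classical
  by_contra hcon
  push_neg at hcon
  have hQne : Nonempty Q := ⟨s⟩
  -- Step 1: a uniform-per-state lower bound on next-bit counts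
  have key : ∀ q : Q, ∃ δ C : ℝ, 0 < δ ∧ δ ≤ 1 ∧ 0 ≤ C ∧
      ∀ (b : Bool) (t : ℕ), δ * wsCnt Δ s x q t - C ≤ wsCntb Δ s x q b t := by
    intro q
    by_cases hq : {t | autoRun Δ s x t = q}.Infinite
    · obtain ⟨h1, h2⟩ := hcon q hq
      obtain ⟨δ1, hδ1, hev1⟩ := not_weaklySparse _ h1
      obtain ⟨δ2, hδ2, hev2⟩ := not_weaklySparse _ h2
      obtain ⟨M, hM⟩ := Filter.eventually_atTop.mp (hev1.and hev2)
      refine ⟨min (min δ1 δ2) 1, (M:ℝ), lt_min (lt_min hδ1 hδ2) one_pos, min_le_right _ _,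
        Nat.cast_nonneg M, ?_⟩
      intro b t
      have htrue : cars (subseqAt Δ s x q) (wsCnt Δ s x q t) = wsCntb Δ s x q true t :=
        cars_subseq Δ s x q hq t
      have hfalse : cars (fun i => !subseqAt Δ s x q i) (wsCnt Δ s x q t)
          = wsCntb Δ s x q false t := by
        have hadd1 := cars_add_not (subseqAt Δ s x q) (wsCnt Δ s x q t)
        have hadd2 := wsCntb_add Δ s x q t
        omega
      have hmnn : (0:ℝ) ≤ (wsCnt Δ s x q t : ℝ) := Nat.cast_nonneg _
      rcases le_or_gt M (wsCnt Δ s x q t) with h | h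
      · obtain ⟨ha, hb'⟩ := hM _ h
        have hMnn : (0:ℝ) ≤ (M:ℝ) := Nat.cast_nonneg _
        have hcomb : min δ1 δ2 * (wsCnt Δ s x q t : ℝ) ≤ (wsCntb Δ s x q b t : ℝ) := by
          cases b
          · rw [← hfalse]
            calc min δ1 δ2 * (wsCnt Δ s x q t : ℝ) ≤ δ2 * (wsCnt Δ s x q t : ℝ) :=
                  mul_le_mul_of_nonneg_right (min_le_right _ _) hmnn
              _ ≤ _ := hb'
          · rw [← htrue]
            calc min δ1 δ2 * (wsCnt Δ s x q t : ℝ) ≤ δ1 * (wsCnt Δ s x q t : ℝ) :=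
                  mul_le_mul_of_nonneg_right (min_le_left _ _) hmnn
              _ ≤ _ := ha
        have hmin : min (min δ1 δ2) 1 * (wsCnt Δ s x q t : ℝ)
            ≤ min δ1 δ2 * (wsCnt Δ s x q t : ℝ) :=
          mul_le_mul_of_nonneg_right (min_le_left _ _) hmnn
        linarith
      · have h1' : min (min δ1 δ2) 1 * (wsCnt Δ s x q t : ℝ) ≤ (wsCnt Δ s x q t : ℝ) := by
          nlinarith [min_le_right (min δ1 δ2) 1]
        have h2' : (wsCnt Δ s x q t : ℝ) < (M:ℝ) := by exact_mod_cast h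
        have h3' : (0:ℝ) ≤ (wsCntb Δ s x q b t : ℝ) := Nat.cast_nonneg _
        linarith
    · rw [Set.not_infinite] at hq
      refine ⟨1, hq.toFinset.card, one_pos, le_refl 1, Nat.cast_nonneg _, ?_⟩
      intro b t
      have hsub : (Finset.range t).filter (fun i => autoRun Δ s x i = q) ⊆ hq.toFinset := by
        intro a ha
        simp only [Finset.mem_filter] at ha
        exact hq.mem_toFinset.mpr ha.2
      have h1 : wsCnt Δ s x q t ≤ hq.toFinset.card := Finset.card_le_card hsub
      have h2 : (wsCnt Δ s x q t : ℝ) ≤ (hq.toFinset.card : ℝ) := by exact_mod_cast h1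
      have h3 : (0:ℝ) ≤ (wsCntb Δ s x q b t : ℝ) := Nat.cast_nonneg _
      linarith
  choose δf Cf hδpos hδle hCnn hbound using key
  have hne : (Finset.univ : Finset Q).Nonempty := ⟨s, Finset.mem_univ s⟩
  set δ := Finset.univ.inf' hne δf with hδdef
  set C := Finset.univ.sup' hne Cf with hCdef
  have hδ0 : 0 < δ := (Finset.lt_inf'_iff hne).mpr fun q _ => hδpos q
  have hδ1 : δ ≤ 1 := le_trans (Finset.inf'_le _ (Finset.mem_univ s)) (hδle s)
  have hC0 : 0 ≤ C := le_trans (hCnn s) (Finset.le_sup' _ (Finset.mem_univ s))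
  have H : ∀ (q : Q) (b : Bool) (t : ℕ), δ * wsCnt Δ s x q t - C ≤ wsCntb Δ s x q b t := by
    intro q b t
    have h1 := hbound q b t
    have h2 : δ ≤ δf q := Finset.inf'_le _ (Finset.mem_univ q)
    have h3 : Cf q ≤ C := Finset.le_sup' _ (Finset.mem_univ q)
    have h4 : (0:ℝ) ≤ (wsCnt Δ s x q t : ℝ) := Nat.cast_nonneg _
    nlinarith
  -- choose words leading to B
  have hword : ∀ q : Q, ∃ l : List Bool,
      ((∃ l' : List Bool, l'.foldl Δ s = q) → l.foldl Δ q ∈ B) := by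
    intro q
    by_cases h : ∃ l' : List Bool, l'.foldl Δ s = q
    · obtain ⟨l, hl⟩ := hsa q h
      exact ⟨l, fun _ => hl⟩
    · exact ⟨[], fun h' => absurd h' h⟩
  choose w hw using hword
  set L := Finset.univ.sup (fun q : Q => (w q).length) with hLdef
  have hwL : ∀ q : Q, (w q).length ≤ L := fun q => by
    rw [hLdef]; exact Finset.le_sup (f := fun q : Q => (w q).length) (Finset.mem_univ q)
  have hk : (0:ℝ) < (Fintype.card Q : ℝ) := by exact_mod_cast Fintype.card_pos
  set ε := δ ^ L / (2 * (Fintype.card Q : ℝ)) with hεdef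
  have hε : 0 < ε := by positivity
  obtain ⟨N, hN⟩ := exists_nat_ge ((2 * ε * L + L * C) / ε)
  have hmain : ∀ T : ℕ, max N (L + 1) ≤ T →
      ε * T ≤ (cars (fun t => decide (autoRun Δ s x t ∈ B)) T : ℝ) := by
    intro T hT
    have hTL : L + 1 ≤ T := le_trans (le_max_right _ _) hT
    have hTN : (N:ℝ) ≤ (T:ℝ) := by exact_mod_cast le_trans (le_max_left _ _) hT
    set t := T - L with htdef
    have ht1 : 1 ≤ t := by omega
    have htT : (t:ℝ) = (T:ℝ) - (L:ℝ) := by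
      have h : t + L = T := by omega
      have h' := congrArg (Nat.cast : ℕ → ℝ) h
      push_cast at h'
      linarith
    obtain ⟨q, hqcnt⟩ := wsPigeon Δ s x t
    have hcntpos : 0 < wsCnt Δ s x q t := by
      have htpos : (0:ℝ) < (t:ℝ) / (Fintype.card Q : ℝ) := by
        apply div_pos _ hk
        exact_mod_cast ht1
      have : (0:ℝ) < (wsCnt Δ s x q t : ℝ) := lt_of_lt_of_le htpos hqcnt
      exact_mod_cast this
    obtain ⟨a, ha⟩ := Finset.card_pos.mp hcntpos
    simp only [Finset.mem_filter] at ha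
    have hreach : ∃ l' : List Bool, l'.foldl Δ s = q := by
      obtain ⟨l, hl⟩ := wsCnt_reach Δ s x a
      exact ⟨l, by rw [hl, ha.2]⟩
    have hqB : (w q).foldl Δ q ∈ B := hw q hreach
    have hchain := wsCnt_chain Δ s x δ C hδ0 hδ1 hC0 H (w q) q t
    have hBcnt : wsCnt Δ s x ((w q).foldl Δ q) (t + (w q).length)
        ≤ cars (fun t => decide (autoRun Δ s x t ∈ B)) (t + (w q).length) := by
      apply Finset.card_le_card
      intro a' ha'
      simp only [Finset.mem_filter, decide_eq_true_eq] at ha' ⊢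
      exact ⟨ha'.1, by rw [ha'.2]; exact hqB⟩
    have hNBmono : cars (fun t => decide (autoRun Δ s x t ∈ B)) (t + (w q).length)
        ≤ cars (fun t => decide (autoRun Δ s x t ∈ B)) T := by
      apply Finset.card_le_card
      apply Finset.filter_subset_filter
      apply Finset.range_subset.mpr
      have := hwL q
      have := hTL
      rw [htdef]
      intro y hy
      rw [Finset.mem_range]
      omega
    have hp2 : (0:ℝ) ≤ (t:ℝ) / (Fintype.card Q : ℝ) :=
      div_nonneg (Nat.cast_nonneg _) (le_of_lt hk)
    have c1 : δ ^ L * ((t:ℝ) / (Fintype.card Q : ℝ))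
        ≤ δ ^ (w q).length * (wsCnt Δ s x q t : ℝ) :=
      mul_le_mul (pow_le_pow_of_le_one (le_of_lt hδ0) hδ1 (hwL q)) hqcnt hp2
        (le_of_lt (pow_pos hδ0 _))
    have c2 : ((w q).length : ℝ) * C ≤ (L:ℝ) * C :=
      mul_le_mul_of_nonneg_right (by exact_mod_cast hwL q) hC0
    have c3 : (wsCnt Δ s x ((w q).foldl Δ q) (t + (w q).length) : ℝ)
        ≤ (cars (fun t => decide (autoRun Δ s x t ∈ B)) T : ℝ) := by
      exact_mod_cast le_trans hBcnt hNBmono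
    have h5 : δ ^ L * ((t:ℝ) / (Fintype.card Q : ℝ)) - (L:ℝ) * C
        ≤ (cars (fun t => decide (autoRun Δ s x t ∈ B)) T : ℝ) := by
      linarith [hchain]
    have he : 2 * ε * ((T:ℝ) - (L:ℝ)) = δ ^ L * ((t:ℝ) / (Fintype.card Q : ℝ)) := by
      rw [hεdef, htT]
      field_simp
    have h5' : 2 * ε * ((T:ℝ) - (L:ℝ)) - (L:ℝ) * C
        ≤ (cars (fun t => decide (autoRun Δ s x t ∈ B)) T : ℝ) := by
      rw [he]; exact h5
    have hNc : 2 * ε * (L:ℝ) + (L:ℝ) * C ≤ ε * (N:ℝ) := by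
      have h6 := (div_le_iff₀ hε).mp hN
      nlinarith
    have h6 : ε * (N:ℝ) ≤ ε * (T:ℝ) := mul_le_mul_of_nonneg_left hTN (le_of_lt hε)
    nlinarith
  have hev : ∀ᶠ T in Filter.atTop,
      ε ≤ (cars (fun t => decide (autoRun Δ s x t ∈ B)) T : ℝ) / T := by
    rw [Filter.eventually_atTop]
    refine ⟨max N (L + 1), fun T hT => ?_⟩
    have hTL : L + 1 ≤ T := le_trans (le_max_right _ _) hT
    have hT0 : (0:ℝ) < (T:ℝ) := by exact_mod_cast (show 0 < T by omega)
    rw [le_div_iff₀ hT0]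
    exact hmain T hT
  have hcb : Filter.IsCoboundedUnder (· ≥ ·) Filter.atTop
      (fun T : ℕ => (cars (fun t => decide (autoRun Δ s x t ∈ B)) T : ℝ) / T) :=
    (Filter.isBoundedUnder_of ⟨1, fun t => carsdiv_le_one _ t⟩).isCoboundedUnder_ge
  have hfin : ε ≤ Filter.liminf
      (fun T : ℕ => (cars (fun t => decide (autoRun Δ s x t ∈ B)) T : ℝ) / T)
      Filter.atTop :=
    Filter.le_liminf_of_le hcb hev
  unfold weaklySparse at hx
  rw [hx] at hfin
  linarith
end

section
/- Let M = (Q, s, Δ) be a finite automaton over the binary alphabet and let x ∈ {0,1}^ω. Suppose that for every q ∈ Q_inf(x), x^{(q)} is neither weakly sparse nor co-weakly sparse. Then every q ∈ Q_inf(x) is frequent on x: there exist α > 0 and β > 0 such that for all T ∈ ℕ, |{t ∈ {0,1,…,T−1} : q_t(x) = q}| ≥ α·T − β. -/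
open Filter Finset

/-- From non-weak-sparsity, a linear lower bound on `cars`. -/
lemma notSparse_linear {y : ℕ → Bool} (hy : ¬ weaklySparse y) :
    ∃ ε : ℝ, 0 < ε ∧ ε ≤ 1 ∧ ∃ m0 : ℕ, 1 ≤ m0 ∧ ∀ m : ℕ, m0 ≤ m →
      ε * m ≤ (cars y m : ℝ) := by
  rw [weaklySparse] at hy
  simp only [cars] at *
  set f : ℕ → ℝ := fun t => (((Finset.range t).filter (fun i => y i = true)).card : ℝ) / t with hfdef
  have hf0 : ∀ t, 0 ≤ f t := fun t => div_nonneg (by positivity) (by positivity)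
  have hf1 : ∀ t, f t ≤ 1 := by
    intro t
    rcases Nat.eq_zero_or_pos t with h | h
    · simp [hfdef, h]
    · rw [hfdef]
      have : (((Finset.range t).filter (fun i => y i = true)).card : ℝ) ≤ t := by
        exact_mod_cast (Finset.card_filter_le _ _).trans_eq (Finset.card_range t)
      rw [div_le_one (by exact_mod_cast h)]
      exact this
  have hcb : IsCoboundedUnder (· ≥ ·) atTop f := isCoboundedUnder_ge_of_le _ hf1
  have hbdd : IsBoundedUnder (· ≥ ·) atTop f := Filter.isBoundedUnder_of ⟨0, hf0⟩
  have hL : 0 ≤ liminf f atTop := le_liminf_of_le hcb (Eventually.of_forall (hf0))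
  have hLpos : 0 < liminf f atTop := lt_of_le_of_ne hL (fun hc => hy hc.symm)
  set L := liminf f atTop
  have hev : ∀ᶠ t in atTop, L / 2 < f t :=
    eventually_lt_of_lt_liminf (by linarith) hbdd
  obtain ⟨m0, hm0⟩ := eventually_atTop.mp hev
  refine ⟨min (L / 2) 1, by positivity, min_le_right _ _, max m0 1, le_max_right _ _, ?_⟩
  intro m hm
  have hm1 : 1 ≤ m := le_trans (le_max_right _ _) hm
  have hm0' : m0 ≤ m := le_trans (le_max_left _ _) hm
  have h1 : L / 2 < f m := hm0 m hm0'
  have hmpos : (0:ℝ) < m := by exact_mod_cast hm1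
  have : L / 2 * m ≤ f m * m := by nlinarith
  have h2 : f m * m = (((Finset.range m).filter (fun i => y i = true)).card : ℝ) := by
    rw [hfdef]; field_simp
  calc min (L/2) 1 * m ≤ L / 2 * m := by
        have := min_le_left (L/2) (1:ℝ); nlinarith
    _ ≤ f m * m := this
    _ = _ := h2

/-- The bijection between initial segments of the subsequence at `q` and visits to `q`. -/
lemma cars_count_eq {p : ℕ → Prop} [DecidablePred p] (hp : (setOf p).Infinite)
    (x : ℕ → Bool) (b : Bool) (T : ℕ) :
    ((Finset.range (Nat.count p T)).filter (fun i => x (Nat.nth p i) = b)).card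
      = ((Finset.range T).filter (fun t => p t ∧ x t = b)).card := by
  apply Finset.card_bij (fun i _ => Nat.nth p i)
  · intro i hi
    simp only [mem_filter, mem_range] at hi ⊢
    exact ⟨Nat.nth_lt_of_lt_count hi.1, Nat.nth_mem_of_infinite hp i, hi.2⟩
  · intro i hi j hj hij
    exact Nat.nth_injective hp hij
  · intro t ht
    simp only [mem_filter, mem_range] at ht
    refine ⟨Nat.count p t, ?_, Nat.nth_count ht.2.1⟩
    simp only [mem_filter, mem_range]
    have h1 : Nat.count p t < Nat.count p T := by
      have : Nat.count p t < Nat.count p (t + 1) := by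
        rw [Nat.count_succ]; simp [ht.2.1]
      exact lt_of_lt_of_le this (Nat.count_monotone _ ht.1)
    exact ⟨h1, by rw [Nat.nth_count ht.2.1]; exact ht.2.2⟩

section Aux

open Filter Finset

variable {Q : Type} [Fintype Q] [DecidableEq Q] (s : Q) (Δ : Q → Bool → Q) (x : ℕ → Bool)

lemma autoRun_succ (t : ℕ) : autoRun Δ s x (t + 1) = Δ (autoRun Δ s x t) (x t) := rfl

lemma count_eq_card (q : Q) (T : ℕ) :
    Nat.count (fun t => autoRun Δ s x t = q) T
      = ((Finset.range T).filter (fun t => autoRun Δ s x t = q)).card := by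
  rw [Nat.count_eq_card_filter_range]

lemma cars_subseq_true (q : Q) (hq : {t : ℕ | autoRun Δ s x t = q}.Infinite) (T : ℕ) :
    cars (subseqAt Δ s x q) (Nat.count (fun t => autoRun Δ s x t = q) T)
      = ((Finset.range T).filter (fun t => autoRun Δ s x t = q ∧ x t = true)).card :=
  cars_count_eq hq x true T

lemma cars_subseq_false (q : Q) (hq : {t : ℕ | autoRun Δ s x t = q}.Infinite) (T : ℕ) :
    cars (fun i => !subseqAt Δ s x q i) (Nat.count (fun t => autoRun Δ s x t = q) T)
      = ((Finset.range T).filter (fun t => autoRun Δ s x t = q ∧ x t = false)).card := by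
  have h := cars_count_eq hq x false T
  rw [cars, ← h]
  apply Finset.card_bij (fun i _ => i) <;> intro i hi <;>
    simp only [mem_filter, mem_range, Bool.not_eq_true', subseqAt] at *
  · exact hi
  · intro j hj hij; exact hij
  · exact ⟨i, by simpa using hi, rfl⟩

end Aux

section Aux2
set_option linter.unusedSectionVars false

open Filter Finset

variable {Q : Type} [Fintype Q] [DecidableEq Q] (s : Q) (Δ : Q → Bool → Q) (x : ℕ → Bool)

lemma filter_bit_le (q : Q) (b : Bool) (T : ℕ) :
    ((Finset.range T).filter (fun t => autoRun Δ s x t = q ∧ x t = b)).card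
      ≤ ((Finset.range (T + 1)).filter (fun t => autoRun Δ s x t = Δ q b)).card := by
  apply Finset.card_le_card_of_injOn (fun t => t + 1)
  · intro t ht
    simp only [Finset.coe_filter, Finset.mem_coe, mem_filter, mem_range, Set.mem_setOf_eq] at ht ⊢
    refine ⟨by omega, ?_⟩
    rw [autoRun_succ, ht.2.1, ht.2.2]
  · intro a _ c _ hac
    simpa using hac

lemma card_filter_succ_le (P : ℕ → Prop) [DecidablePred P] (T : ℕ) :
    ((Finset.range (T + 1)).filter P).card ≤ ((Finset.range T).filter P).card + 1 := by
  rw [Finset.range_add_one, Finset.filter_insert]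
  split
  · exact Finset.card_insert_le _ _
  · exact Nat.le_succ _

/-- The key one-step estimate. -/
lemma step_bound (q : Q) (hq : {t : ℕ | autoRun Δ s x t = q}.Infinite)
    {ε : ℝ} {M : ℕ} (hε : 0 < ε) (hε1 : ε ≤ 1)
    (hb : ∀ m : ℕ, M ≤ m → ε * m ≤ (cars (subseqAt Δ s x q) m : ℝ) ∧
        ε * m ≤ (cars (fun i => !subseqAt Δ s x q i) m : ℝ))
    (b : Bool) (T : ℕ) :
    ε * (((Finset.range T).filter (fun t => autoRun Δ s x t = q)).card : ℝ) - (M + 1)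
      ≤ (((Finset.range T).filter (fun t => autoRun Δ s x t = Δ q b)).card : ℝ) := by
  set m : ℕ := ((Finset.range T).filter (fun t => autoRun Δ s x t = q)).card with hm
  rcases lt_or_ge m M with hlt | hle
  · have h1 : ε * m ≤ m := by nlinarith [Nat.cast_nonneg (α := ℝ) m]
    have h2 : (m : ℝ) < M := by exact_mod_cast hlt
    have : (0:ℝ) ≤ (((Finset.range T).filter (fun t => autoRun Δ s x t = Δ q b)).card : ℝ) := by
      positivity
    linarith
  · have hcount : Nat.count (fun t => autoRun Δ s x t = q) T = m := count_eq_card s Δ x q T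
    have hcars : ε * m ≤
        (((Finset.range T).filter (fun t => autoRun Δ s x t = q ∧ x t = b)).card : ℝ) := by
      rcases b with _ | _
      · rw [← cars_subseq_false s Δ x q hq T, hcount]
        exact (hb m hle).2
      · rw [← cars_subseq_true s Δ x q hq T, hcount]
        exact (hb m hle).1
    have h1 := filter_bit_le s Δ x q b T
    have h2 := card_filter_succ_le (fun t => autoRun Δ s x t = Δ q b) T
    have h3 : (((Finset.range T).filter (fun t => autoRun Δ s x t = q ∧ x t = b)).card : ℝ)
        ≤ (((Finset.range T).filter (fun t => autoRun Δ s x t = Δ q b)).card : ℝ) + 1 := by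
      exact_mod_cast le_trans h1 h2
    have hM0 : (0:ℝ) ≤ M := Nat.cast_nonneg M
    linarith

/-- Unboundedness of visit counts for infinitely visited states. -/
lemma visits_unbounded (q : Q) (hq : {t : ℕ | autoRun Δ s x t = q}.Infinite) (n : ℕ) :
    ∃ T : ℕ, n ≤ ((Finset.range T).filter (fun t => autoRun Δ s x t = q)).card := by
  refine ⟨Nat.nth (fun t => autoRun Δ s x t = q) n + 1, ?_⟩
  rw [← count_eq_card]
  have h1 : Nat.count (fun t => autoRun Δ s x t = q)
      (Nat.nth (fun t => autoRun Δ s x t = q) n) = n := Nat.count_nth_of_infinite hq n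
  have h2 := Nat.count_succ (fun t => autoRun Δ s x t = q)
      (Nat.nth (fun t => autoRun Δ s x t = q) n)
  rw [h2, h1]
  simp [Nat.nth_mem_of_infinite hq n]

/-- Closure of the set of infinitely visited states. -/
lemma infinite_next (q : Q) (hq : {t : ℕ | autoRun Δ s x t = q}.Infinite)
    {ε : ℝ} {M : ℕ} (hε : 0 < ε) (hε1 : ε ≤ 1)
    (hb : ∀ m : ℕ, M ≤ m → ε * m ≤ (cars (subseqAt Δ s x q) m : ℝ) ∧
        ε * m ≤ (cars (fun i => !subseqAt Δ s x q i) m : ℝ))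
    (b : Bool) : {t : ℕ | autoRun Δ s x t = Δ q b}.Infinite := by
  by_contra hfin
  rw [Set.not_infinite] at hfin
  set K : ℕ := hfin.toFinset.card with hK
  have hbdd : ∀ T : ℕ, ((Finset.range T).filter (fun t => autoRun Δ s x t = Δ q b)).card ≤ K := by
    intro T
    apply Finset.card_le_card
    intro t ht
    simp only [mem_filter, mem_range, Set.Finite.mem_toFinset, Set.mem_setOf_eq] at ht ⊢
    exact ht.2
  obtain ⟨n, hn⟩ := exists_nat_gt ((K + M + 1 : ℝ) / ε)
  obtain ⟨T, hT⟩ := visits_unbounded s Δ x q hq n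
  have h1 := step_bound s Δ x q hq hε hε1 hb b T
  have h2 : (((Finset.range T).filter (fun t => autoRun Δ s x t = Δ q b)).card : ℝ) ≤ K := by
    exact_mod_cast hbdd T
  have h3 : (n : ℝ) ≤ (((Finset.range T).filter (fun t => autoRun Δ s x t = q)).card : ℝ) := by
    exact_mod_cast hT
  have h4 : (K + M + 1 : ℝ) < ε * n := by
    rw [div_lt_iff₀ hε] at hn; linarith
  nlinarith

end Aux2

/-- The contrapositive step in the proof of Lemma 4.3: if for every state `q` visited
infinitely often on `x` the subsequence `x^{(q)}` is neither weakly sparse nor co-weakly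
sparse, then every state `q` visited infinitely often is *frequent* on `x`: there are
`α, β > 0` with `|{t < T : q_t(x) = q}| ≥ αT - β` for all `T ∈ ℕ`. -/
theorem infinitely_visited_states_frequent {Q : Type} [Fintype Q] [DecidableEq Q]
    (s : Q) (Δ : Q → Bool → Q) (x : ℕ → Bool)
    (h : ∀ q : Q, {t : ℕ | autoRun Δ s x t = q}.Infinite →
      ¬weaklySparse (subseqAt Δ s x q) ∧ ¬weaklySparse (fun i => !subseqAt Δ s x q i)) :
    ∀ q : Q, {t : ℕ | autoRun Δ s x t = q}.Infinite →
      ∃ α β : ℝ, 0 < α ∧ 0 < β ∧ ∀ T : ℕ, 1 ≤ T →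
        α * T - β ≤ (((Finset.range T).filter (fun t => autoRun Δ s x t = q)).card : ℝ) := by
  classical
  intro q hq
  have hQne : Nonempty Q := ⟨q⟩
  have hQpos : 0 < Fintype.card Q := Fintype.card_pos_iff.mpr hQne
  -- uniform ε and M
  have tot : ∀ q' : Q, ∃ ε : ℝ, ∃ m0 : ℕ, 0 < ε ∧ ε ≤ 1 ∧
      ({t : ℕ | autoRun Δ s x t = q'}.Infinite → ∀ m : ℕ, m0 ≤ m →
        ε * m ≤ (cars (subseqAt Δ s x q') m : ℝ) ∧
        ε * m ≤ (cars (fun i => !subseqAt Δ s x q' i) m : ℝ)) := by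
    intro q'
    by_cases hinf : {t : ℕ | autoRun Δ s x t = q'}.Infinite
    · obtain ⟨h1, h2⟩ := h q' hinf
      obtain ⟨ε1, hε1, hε1', m1, _, hb1⟩ := notSparse_linear h1
      obtain ⟨ε2, hε2, hε2', m2, _, hb2⟩ := notSparse_linear h2
      refine ⟨min ε1 ε2, max m1 m2, lt_min hε1 hε2, le_trans (min_le_left _ _) hε1',
        fun _ m hm => ⟨?_, ?_⟩⟩
      · have hb := hb1 m (le_trans (le_max_left _ _) hm)
        nlinarith [min_le_left ε1 ε2, Nat.cast_nonneg (α := ℝ) m]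
      · have hb := hb2 m (le_trans (le_max_right _ _) hm)
        nlinarith [min_le_right ε1 ε2, Nat.cast_nonneg (α := ℝ) m]
    · exact ⟨1, 0, one_pos, le_refl 1, fun hc => absurd hc hinf⟩
  choose εf Mf hεf hεf1 hbf using tot
  set εu : ℝ := Finset.univ.inf' Finset.univ_nonempty εf with hεu_def
  have hεu_le : ∀ q' : Q, εu ≤ εf q' := fun q' => Finset.inf'_le _ (Finset.mem_univ q')
  have hεu_pos : 0 < εu := by
    rw [hεu_def, Finset.lt_inf'_iff]
    exact fun q' _ => hεf q'
  have hεu1 : εu ≤ 1 := le_trans (hεu_le q) (hεf1 q)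
  set Mu : ℕ := Finset.univ.sup Mf with hMu_def
  have hMu : ∀ q' : Q, Mf q' ≤ Mu := fun q' => Finset.le_sup (Finset.mem_univ q')
  -- uniform cars bound
  have hub : ∀ q' : Q, {t : ℕ | autoRun Δ s x t = q'}.Infinite → ∀ m : ℕ, Mu ≤ m →
      εu * m ≤ (cars (subseqAt Δ s x q') m : ℝ) ∧
      εu * m ≤ (cars (fun i => !subseqAt Δ s x q' i) m : ℝ) := by
    intro q' hinf m hm
    obtain ⟨hc1, hc2⟩ := hbf q' hinf m (le_trans (hMu q') hm)
    constructor
    · nlinarith [hεu_le q', Nat.cast_nonneg (α := ℝ) m]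
    · nlinarith [hεu_le q', Nat.cast_nonneg (α := ℝ) m]
  -- uniform one-step bound and closure
  have stepU : ∀ q' : Q, {t : ℕ | autoRun Δ s x t = q'}.Infinite → ∀ (b : Bool) (T : ℕ),
      εu * (((Finset.range T).filter (fun t => autoRun Δ s x t = q')).card : ℝ) - (Mu + 1)
        ≤ (((Finset.range T).filter (fun t => autoRun Δ s x t = Δ q' b)).card : ℝ) :=
    fun q' hinf b T => step_bound s Δ x q' hinf hεu_pos hεu1 (hub q' hinf) b T
  have closU : ∀ q' : Q, {t : ℕ | autoRun Δ s x t = q'}.Infinite → ∀ b : Bool,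
      {t : ℕ | autoRun Δ s x t = Δ q' b}.Infinite :=
    fun q' hinf b => infinite_next s Δ x q' hinf hεu_pos hεu1 (hub q' hinf) b
  -- iteration along the run
  have iter : ∀ (k t0 : ℕ), {t : ℕ | autoRun Δ s x t = autoRun Δ s x t0}.Infinite →
      {t : ℕ | autoRun Δ s x t = autoRun Δ s x (t0 + k)}.Infinite ∧
      ∃ C : ℝ, 0 ≤ C ∧ ∀ T : ℕ,
        εu ^ k * (((Finset.range T).filter (fun t => autoRun Δ s x t = autoRun Δ s x t0)).card : ℝ) - C
          ≤ (((Finset.range T).filter (fun t => autoRun Δ s x t = autoRun Δ s x (t0 + k))).card : ℝ) := by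
    intro k
    induction k with
    | zero => exact fun t0 h0 => ⟨h0, 0, le_refl 0, fun T => by simp⟩
    | succ k ih =>
      intro t0 h0
      obtain ⟨hinf', C, hC0, hCb⟩ := ih t0 h0
      have heq : autoRun Δ s x (t0 + (k + 1)) = Δ (autoRun Δ s x (t0 + k)) (x (t0 + k)) := rfl
      have hnext := closU _ hinf' (x (t0 + k))
      rw [← heq] at hnext
      refine ⟨hnext, εu * C + (Mu + 1), by positivity, ?_⟩
      intro T
      have h1 := stepU _ hinf' (x (t0 + k)) T
      rw [← heq] at h1
      have h2 := hCb T
      have h3 := mul_le_mul_of_nonneg_left h2 hεu_pos.le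
      rw [pow_succ]
      nlinarith [Nat.cast_nonneg (α := ℝ)
        (((Finset.range T).filter (fun t => autoRun Δ s x t = autoRun Δ s x (t0 + k))).card)]
  -- reachability bound towards q
  have reach : ∀ q' : Q, {t : ℕ | autoRun Δ s x t = q'}.Infinite →
      ∃ (k : ℕ) (C : ℝ), 0 ≤ C ∧ ∀ T : ℕ,
        εu ^ k * (((Finset.range T).filter (fun t => autoRun Δ s x t = q')).card : ℝ) - C
          ≤ (((Finset.range T).filter (fun t => autoRun Δ s x t = q)).card : ℝ) := by
    intro q' hinf'
    obtain ⟨t0, ht0⟩ := hinf'.nonempty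
    simp only [Set.mem_setOf_eq] at ht0
    have hex : ∃ t1 : ℕ, t0 ≤ t1 ∧ autoRun Δ s x t1 = q := by
      by_contra hc
      push_neg at hc
      refine hq ((Set.finite_Iio t0).subset ?_)
      intro t ht
      simp only [Set.mem_setOf_eq] at ht
      exact lt_of_not_ge fun hle => hc t hle ht
    obtain ⟨t1, ht01, ht1⟩ := hex
    obtain ⟨_, C, hC0, hCb⟩ := iter (t1 - t0) t0 (by rwa [ht0])
    refine ⟨t1 - t0, C, hC0, fun T => ?_⟩
    have he : t0 + (t1 - t0) = t1 := by omega
    have hb := hCb T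
    rw [he, ht1, ht0] at hb
    exact hb
  -- totalize and uniformize reach
  have totr : ∀ q' : Q, ∃ (k : ℕ) (C : ℝ), 0 ≤ C ∧
      ({t : ℕ | autoRun Δ s x t = q'}.Infinite → ∀ T : ℕ,
        εu ^ k * (((Finset.range T).filter (fun t => autoRun Δ s x t = q')).card : ℝ) - C
          ≤ (((Finset.range T).filter (fun t => autoRun Δ s x t = q)).card : ℝ)) := by
    intro q'
    by_cases hinf : {t : ℕ | autoRun Δ s x t = q'}.Infinite
    · obtain ⟨k, C, hC0, hCb⟩ := reach q' hinf
      exact ⟨k, C, hC0, fun _ => hCb⟩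
    · exact ⟨0, 0, le_refl 0, fun hc => absurd hc hinf⟩
  choose kf Cf hCf0 hreach using totr
  set N : ℕ := Finset.univ.sup kf with hN_def
  set Cmax : ℝ := Finset.univ.sup' Finset.univ_nonempty Cf with hCmax_def
  have hCmax : ∀ q' : Q, Cf q' ≤ Cmax := fun q' => Finset.le_sup' _ (Finset.mem_univ q')
  have hCmax0 : 0 ≤ Cmax := le_trans (hCf0 q) (hCmax q)
  -- bound for finitely visited states
  have totB : ∀ q' : Q, ∃ B : ℕ, ¬{t : ℕ | autoRun Δ s x t = q'}.Infinite → ∀ T : ℕ,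
      ((Finset.range T).filter (fun t => autoRun Δ s x t = q')).card ≤ B := by
    intro q'
    by_cases hinf : {t : ℕ | autoRun Δ s x t = q'}.Infinite
    · exact ⟨0, fun hc => absurd hinf hc⟩
    · rw [Set.not_infinite] at hinf
      refine ⟨hinf.toFinset.card, fun _ T => Finset.card_le_card ?_⟩
      intro t ht
      simp only [Finset.mem_filter, Finset.mem_range, Set.Finite.mem_toFinset,
        Set.mem_setOf_eq] at ht ⊢
      exact ht.2
  choose Bf hBf using totB
  set Bmax : ℕ := Finset.univ.sup Bf with hBmax_def
  have hBmax : ∀ q' : Q, Bf q' ≤ Bmax := fun q' => Finset.le_sup (Finset.mem_univ q')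
  -- the constants
  refine ⟨εu ^ N / Fintype.card Q, εu ^ N * Bmax + Cmax + 1, by positivity, by positivity, ?_⟩
  intro T _
  -- pigeonhole
  have hsum : ∑ q' : Q, ((Finset.range T).filter (fun t => autoRun Δ s x t = q')).card = T := by
    have hs := Finset.card_eq_sum_card_fiberwise
      (s := Finset.range T) (t := Finset.univ) (f := fun t => autoRun Δ s x t)
      (fun t _ => Finset.mem_univ (autoRun Δ s x t))
    rw [Finset.card_range] at hs
    exact hs.symm
  set S : Finset Q := Finset.univ.filter
      (fun q' => {t : ℕ | autoRun Δ s x t = q'}.Infinite) with hS_def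
  have hqS : q ∈ S := Finset.mem_filter.mpr ⟨Finset.mem_univ q, hq⟩
  have hSne : S.Nonempty := ⟨q, hqS⟩
  obtain ⟨qm, hqmS, hqm⟩ := S.exists_max_image
    (fun q' => ((Finset.range T).filter (fun t => autoRun Δ s x t = q')).card) hSne
  have hqmInf : {t : ℕ | autoRun Δ s x t = qm}.Infinite := (Finset.mem_filter.mp hqmS).2
  -- T ≤ |Q| * v qm T + |Q| * Bmax
  have hTle : T ≤ Fintype.card Q *
      ((Finset.range T).filter (fun t => autoRun Δ s x t = qm)).card
      + Fintype.card Q * Bmax := by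
    have hsplit := Finset.sum_filter_add_sum_filter_not Finset.univ
      (fun q' => {t : ℕ | autoRun Δ s x t = q'}.Infinite)
      (fun q' => ((Finset.range T).filter (fun t => autoRun Δ s x t = q')).card)
    have h1 : ∑ q' ∈ S, ((Finset.range T).filter (fun t => autoRun Δ s x t = q')).card
        ≤ S.card • ((Finset.range T).filter (fun t => autoRun Δ s x t = qm)).card :=
      Finset.sum_le_card_nsmul _ _ _ fun i hi => hqm i hi
    have h2 : ∑ q' ∈ Finset.univ.filter
        (fun q' => ¬{t : ℕ | autoRun Δ s x t = q'}.Infinite),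
        ((Finset.range T).filter (fun t => autoRun Δ s x t = q')).card
        ≤ (Finset.univ.filter
            (fun q' => ¬{t : ℕ | autoRun Δ s x t = q'}.Infinite)).card • Bmax :=
      Finset.sum_le_card_nsmul _ _ _ fun i hi =>
        le_trans (hBf i (Finset.mem_filter.mp hi).2 T) (hBmax i)
    have hc1 : S.card ≤ Fintype.card Q := Finset.card_le_univ S
    have hc2 : (Finset.univ.filter
        (fun q' => ¬{t : ℕ | autoRun Δ s x t = q'}.Infinite)).card ≤ Fintype.card Q :=
      Finset.card_le_univ _
    calc T = ∑ q' : Q, ((Finset.range T).filter (fun t => autoRun Δ s x t = q')).card :=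
          hsum.symm
      _ = _ + _ := hsplit.symm
      _ ≤ _ := by
          simp only [smul_eq_mul] at h1 h2
          have := Nat.mul_le_mul hc1
            (le_refl (((Finset.range T).filter (fun t => autoRun Δ s x t = qm)).card))
          have := Nat.mul_le_mul hc2 (le_refl Bmax)
          gcongr <;> [exact h1.trans (by gcongr); exact h2.trans (by gcongr)]
  -- assemble
  have hkN : kf qm ≤ N := Finset.le_sup (Finset.mem_univ qm)
  have hpow : εu ^ N ≤ εu ^ (kf qm) := pow_le_pow_of_le_one hεu_pos.le hεu1 hkN
  have hvqm0 : (0:ℝ) ≤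
      (((Finset.range T).filter (fun t => autoRun Δ s x t = qm)).card : ℝ) := by positivity
  have h6 : εu ^ N *
      (((Finset.range T).filter (fun t => autoRun Δ s x t = qm)).card : ℝ) - Cmax
      ≤ (((Finset.range T).filter (fun t => autoRun Δ s x t = q)).card : ℝ) := by
    have hr := hreach qm hqmInf T
    nlinarith [hCmax qm]
  have h5 : (T : ℝ) ≤ (Fintype.card Q : ℝ) *
      (((Finset.range T).filter (fun t => autoRun Δ s x t = qm)).card : ℝ)
      + (Fintype.card Q : ℝ) * Bmax := by exact_mod_cast hTle
  have hQc : (0:ℝ) < (Fintype.card Q : ℝ) := by exact_mod_cast hQpos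
  have hA : (0:ℝ) < εu ^ N := pow_pos hεu_pos N
  have key : εu ^ N / (Fintype.card Q : ℝ) * T ≤
      εu ^ N * (((Finset.range T).filter (fun t => autoRun Δ s x t = qm)).card : ℝ)
      + εu ^ N * Bmax := by
    rw [div_mul_eq_mul_div, div_le_iff₀ hQc]
    nlinarith [mul_le_mul_of_nonneg_left h5 hA.le]
  linarith
end
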